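/- arXiv:2412.05999 — 4 statements merged into one kernel-verified Lean document; each statement's English description precedes it below -/
import Mathlib

section
/- Let A be an m×m alternating matrix over F. Then there exist a matrix U ∈ GL_m(𝔬), an integer r with 2r ≤ m, and integers λ_1 ≥ λ_2 ≥ … ≥ λ_r, such that U·A·Uᵀ is the block-diagonal matrix diag(J(λ_1), J(λ_2), …, J(λ_r), 0), where the final block is the (m−2r)×(m−2r) zero matrix. Moreover, if m is even and det A ≠ 0, then necessarily 2r = m. -/
/-- The block-diagonal matrix `diag(J(λ₁), …, J(λ_r), 0)` of size `m × m`, where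
`J(d) = [[0, π^d], [−π^d, 0]]` and the final block is the `(m − 2r) × (m − 2r)` zero matrix.
For `0 ≤ l < r`, block `l` occupies rows and columns `2l, 2l+1`. -/
noncomputable def altBlockDiag {F : Type} [Field F] (π : F) (m r : ℕ) (lam : ℕ → ℤ) :
    Matrix (Fin m) (Fin m) F :=
  Matrix.of fun i j =>
    if i.val + 1 = j.val ∧ j.val < 2 * r ∧ i.val % 2 = 0 then π ^ lam (i.val / 2)
    else if j.val + 1 = i.val ∧ i.val < 2 * r ∧ j.val % 2 = 0 then -π ^ lam (j.val / 2)
    else 0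



section Val
variable {F : Type} [Field F] (v : F → WithTop ℤ)
    (hv0 : ∀ x, v x = ⊤ ↔ x = 0)
    (hvmul : ∀ x y, v (x * y) = v x + v y)
    (hvadd : ∀ x y, min (v x) (v y) ≤ v (x + y))

include hv0 hvmul

lemma vone : v 1 = 0 := by
  have h := hvmul 1 1
  rw [mul_one] at h
  have h1 : v 1 ≠ ⊤ := by simp [hv0]
  lift v 1 to ℤ using h1 with a
  have : a = a + a := by exact_mod_cast h
  exact_mod_cast by omega

lemma vneg (x : F) : v (-x) = v x := by
  have hm : v (-1 : F) = 0 := by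
    have h := hvmul (-1) (-1)
    rw [neg_mul_neg, one_mul, vone v hv0 hvmul] at h
    have h1 : v (-1 : F) ≠ ⊤ := by simp [hv0]
    lift v (-1 : F) to ℤ using h1 with a
    have : (0 : ℤ) = a + a := by exact_mod_cast h
    exact_mod_cast by omega
  calc v (-x) = v ((-1) * x) := by rw [neg_one_mul]
  _ = v x := by rw [hvmul, hm, zero_add]

lemma vinv (x : F) (hx : x ≠ 0) : v x⁻¹ + v x = 0 := by
  have := hvmul x⁻¹ x
  rw [inv_mul_cancel₀ hx, vone v hv0 hvmul] at this
  exact this.symm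

end Val

section Val2
variable {F : Type} [Field F] (v : F → WithTop ℤ)
    (hv0 : ∀ x, v x = ⊤ ↔ x = 0)
    (hvmul : ∀ x y, v (x * y) = v x + v y)
    (hvadd : ∀ x y, min (v x) (v y) ≤ v (x + y))
    (π : F) (hπ : v π = 1)

include hv0 hvmul hπ

lemma vzpow : ∀ d : ℤ, v (π ^ d) = (d : WithTop ℤ) := by
  have hπ0 : π ≠ 0 := by intro h; rw [h, (hv0 0).2 rfl] at hπ; exact (by simp : (⊤:WithTop ℤ) ≠ 1) hπ
  have hnat : ∀ k : ℕ, v (π ^ k) = (k : WithTop ℤ) := by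
    intro k
    induction k with
    | zero => simpa using vone v hv0 hvmul
    | succ n ih =>
      rw [pow_succ, hvmul, ih, hπ]
      push_cast
      rfl
  intro d
  rcases le_or_gt 0 d with hd | hd
  · lift d to ℕ using hd
    rw [zpow_natCast, hnat]; exact_mod_cast rfl
  · have hdn : (0:ℤ) ≤ -d := by omega
    have h1 : π ^ d * π ^ (-d) = 1 := by
      rw [← zpow_add₀ hπ0]; simp
    have h2 := hvmul (π ^ d) (π ^ (-d))
    rw [h1, vone v hv0 hvmul] at h2
    have h3 : v (π ^ (-d)) = ((-d : ℤ) : WithTop ℤ) := by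
      lift (-d) to ℕ using hdn with k hk
      rw [zpow_natCast, hnat]; exact_mod_cast rfl
    rw [h3] at h2
    have h4 : v (π ^ d) ≠ ⊤ := by
      intro h; rw [h] at h2; simp [top_add] at h2
    lift v (π ^ d) to ℤ using h4 with a
    have : (0:ℤ) = a + (-d) := by exact_mod_cast h2
    have : a = d := by omega
    exact_mod_cast this
end Val2


open Matrix

section Mat
variable {F : Type} [Field F] {ι : Type} [Fintype ι] [DecidableEq ι]
set_option linter.unusedSectionVars false

/-- alternating with zero diagonal -/
def AltM (M : Matrix ι ι F) : Prop := Mᵀ = -M ∧ ∀ i, M i i = 0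

lemma altm_entry {M : Matrix ι ι F} (h : AltM M) (i j : ι) : M j i = -M i j := by
  have := congrFun (congrFun h.1 i) j
  simpa [Matrix.transpose_apply] using this

lemma quad_zero {M : Matrix ι ι F} (h : AltM M) (x y : ι → F) (hxy : x = y) :
    ∑ k, ∑ l, x k * M k l * y l = 0 := by
  subst hxy
  rw [← Finset.sum_product']
  apply Finset.sum_involution (fun p _ => (p.2, p.1))
  · intro a _
    have := altm_entry h a.1 a.2
    ring_nf
    rw [this]
    ring
  · intro a _ hfa
    intro hc
    apply hfa
    have h1 : a.2 = a.1 := congrArg Prod.fst hc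
    rw [h1, h.2]
    ring
  · intro a ha; simp
  · intro a ha; rfl

lemma altm_conj {κ : Type} [Fintype κ] {M : Matrix ι ι F} (h : AltM M)
    (U : Matrix κ ι F) : AltM (U * M * Uᵀ) := by
  constructor
  · rw [Matrix.transpose_mul, Matrix.transpose_mul, Matrix.transpose_transpose, h.1]
    simp [Matrix.mul_assoc]
  · intro i
    have : (U * M * Uᵀ) i i = ∑ k, ∑ l, U i k * M k l * U i l := by
      simp only [Matrix.mul_apply, Matrix.transpose_apply, Finset.sum_mul]
      rw [Finset.sum_comm]
    rw [this, quad_zero h _ _ rfl]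

/-- invertible over the subring O -/
def IsGL (O : Subring F) (U : Matrix ι ι F) : Prop :=
  (∀ i j, U i j ∈ O) ∧ ∃ V : Matrix ι ι F, (∀ i j, V i j ∈ O) ∧ U * V = 1 ∧ V * U = 1

lemma isgl_one (O : Subring F) : IsGL O (1 : Matrix ι ι F) := by
  refine ⟨?_, 1, ?_, by simp, by simp⟩ <;>
  · intro i j
    rw [Matrix.one_apply]
    split_ifs <;> first | exact O.one_mem | exact O.zero_mem

lemma oent_mul {O : Subring F} {U W : Matrix ι ι F} (hU : ∀ i j, U i j ∈ O)
    (hW : ∀ i j, W i j ∈ O) : ∀ i j, (U * W) i j ∈ O := by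
  intro i j
  rw [Matrix.mul_apply]
  exact Subring.sum_mem O fun k _ => O.mul_mem (hU i k) (hW k j)

lemma isgl_mul {O : Subring F} {U W : Matrix ι ι F} (hU : IsGL O U) (hW : IsGL O W) :
    IsGL O (U * W) := by
  obtain ⟨hU1, VU, hVU1, hUV2, hUV3⟩ := hU
  obtain ⟨hW1, VW, hVW1, hWV2, hWV3⟩ := hW
  refine ⟨oent_mul hU1 hW1, VW * VU, oent_mul hVW1 hVU1, ?_, ?_⟩
  · rw [Matrix.mul_assoc, ← Matrix.mul_assoc W, hWV2, Matrix.one_mul, hUV2]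
  · rw [Matrix.mul_assoc, ← Matrix.mul_assoc VU, hUV3, Matrix.one_mul, hWV3]

/-- congruence over O -/
def CongTo (O : Subring F) (A B : Matrix ι ι F) : Prop :=
  ∃ U, IsGL O U ∧ U * A * Uᵀ = B

lemma congto_trans {O : Subring F} {A B C : Matrix ι ι F} (h1 : CongTo O A B)
    (h2 : CongTo O B C) : CongTo O A C := by
  obtain ⟨U1, hU1, he1⟩ := h1
  obtain ⟨U2, hU2, he2⟩ := h2
  refine ⟨U2 * U1, isgl_mul hU2 hU1, ?_⟩
  rw [Matrix.transpose_mul, ← he2, ← he1]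
  simp [Matrix.mul_assoc]

/-- permutation matrix -/
def Pm (σ : Equiv.Perm ι) : Matrix ι ι F := Matrix.of fun i j => if σ i = j then 1 else 0

lemma pm_mul (σ : Equiv.Perm ι) (M : Matrix ι ι F) : Pm σ * M = M.submatrix σ id := by
  ext i j
  simp [Pm, Matrix.mul_apply]

lemma mul_pmT (σ : Equiv.Perm ι) (M : Matrix ι ι F) :
    M * (Pm σ : Matrix ι ι F)ᵀ = M.submatrix id σ := by
  ext i j
  simp [Pm, Matrix.mul_apply, Matrix.transpose_apply]

lemma isgl_pm (O : Subring F) (σ : Equiv.Perm ι) : IsGL O (Pm σ : Matrix ι ι F) := by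
  have h1 : (Pm σ : Matrix ι ι F) * (Pm σ)ᵀ = 1 := by
    rw [mul_pmT]
    ext i j
    simp [Pm, Matrix.submatrix, Matrix.one_apply, EmbeddingLike.apply_eq_iff_eq]
  refine ⟨?_, (Pm σ)ᵀ, ?_, h1, mul_eq_one_comm.1 h1⟩
  · intro i j; rw [Pm, Matrix.of_apply]
    split_ifs <;> first | exact O.one_mem | exact O.zero_mem
  · intro i j; rw [Matrix.transpose_apply, Pm, Matrix.of_apply]
    split_ifs <;> first | exact O.one_mem | exact O.zero_mem

lemma congto_perm (O : Subring F) (σ : Equiv.Perm ι) (A : Matrix ι ι F) :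
    CongTo O A (A.submatrix σ σ) := by
  refine ⟨Pm σ, isgl_pm O σ, ?_⟩
  rw [pm_mul, mul_pmT]
  rfl

end Mat

open Matrix

section VSum
variable {F : Type} [Field F] (v : F → WithTop ℤ)
    (hv0 : ∀ x, v x = ⊤ ↔ x = 0)
    (hvmul : ∀ x y, v (x * y) = v x + v y)
    (hvadd : ∀ x y, min (v x) (v y) ≤ v (x + y))

include hv0 hvadd in
lemma vsum {ι : Type} (s : Finset ι) (f : ι → F) (c : WithTop ℤ)
    (h : ∀ i ∈ s, c ≤ v (f i)) : c ≤ v (∑ i ∈ s, f i) := by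
  induction s using Finset.cons_induction with
  | empty => simp [(hv0 0).2 rfl]
  | cons a s ha ih =>
    rw [Finset.sum_cons]
    refine le_trans ?_ (hvadd _ _)
    refine le_min (h a (Finset.mem_cons_self a s)) (ih fun i hi => h i (Finset.mem_cons_of_mem hi))

include hv0 hvmul hvadd in
lemma vconj {ι κ : Type} [Fintype ι] (O : Subring F) (hO : ∀ x, x ∈ O ↔ 0 ≤ v x)
    (U : Matrix κ ι F) (C : Matrix ι ι F) (W : Matrix ι κ F) (d : ℤ)
    (hU : ∀ i j, U i j ∈ O) (hW : ∀ i j, W i j ∈ O)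
    (hC : ∀ i j, (d : WithTop ℤ) ≤ v (C i j)) :
    ∀ i j, (d : WithTop ℤ) ≤ v ((U * C * W) i j) := by
  intro i j
  rw [Matrix.mul_apply]
  refine vsum v hv0 hvadd _ _ _ fun k _ => ?_
  rw [Matrix.mul_apply, Finset.sum_mul]
  refine vsum v hv0 hvadd _ _ _ fun l _ => ?_
  rw [hvmul, hvmul]
  have h1 : (0 : WithTop ℤ) ≤ v (U i l) := (hO _).1 (hU i l)
  have h2 : (0 : WithTop ℤ) ≤ v (W k j) := (hO _).1 (hW k j)
  calc (d : WithTop ℤ) = 0 + d + 0 := by simp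
  _ ≤ v (U i l) + v (C l k) + v (W k j) := add_le_add (add_le_add h1 (hC l k)) h2

end VSum

open Matrix


lemma fse_symm {n : ℕ} (i : Fin (2 + n)) :
    (finSumFinEquiv.symm i : Fin 2 ⊕ Fin n) =
      if h : i.val < 2 then Sum.inl ⟨i.val, h⟩ else Sum.inr ⟨i.val - 2, by omega⟩ := by
  split_ifs with h
  · rw [Equiv.symm_apply_eq, finSumFinEquiv_apply_left]
    exact Fin.ext rfl
  · rw [Equiv.symm_apply_eq, finSumFinEquiv_apply_right]
    exact Fin.ext (by simp [Fin.natAdd]; omega)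

lemma blockEq {F : Type} [Field F] (π : F) (n r' : ℕ) (d : ℤ) (lam' : ℕ → ℤ)
    (hr : 2 * r' ≤ n) :
    (Matrix.fromBlocks (!![0, π ^ (d : ℤ); -π ^ (d : ℤ), 0]) 0 0 (altBlockDiag π n r' lam')).submatrix
        (finSumFinEquiv.symm) (finSumFinEquiv.symm) =
      altBlockDiag π (2 + n) (r' + 1) (fun l => if l = 0 then d else lam' (l - 1)) := by
  ext i j
  rw [Matrix.submatrix_apply, fse_symm, fse_symm]
  by_cases hi : i.val < 2 <;> by_cases hj : j.val < 2
  · rw [dif_pos hi, dif_pos hj, Matrix.fromBlocks_apply₁₁]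
    have hi' : i.val = 0 ∨ i.val = 1 := by omega
    have hj' : j.val = 0 ∨ j.val = 1 := by omega
    rcases hi' with hi' | hi' <;> rcases hj' with hj' | hj'
    · rw [show (⟨i.val, hi⟩ : Fin 2) = 0 from Fin.ext (by simp [hi']),
        show (⟨j.val, hj⟩ : Fin 2) = 0 from Fin.ext (by simp [hj'])]
      simp only [altBlockDiag, Matrix.of_apply]
      rw [if_neg (by omega), if_neg (by omega)]
      simp
    · rw [show (⟨i.val, hi⟩ : Fin 2) = 0 from Fin.ext (by simp [hi']),
        show (⟨j.val, hj⟩ : Fin 2) = 1 from Fin.ext (by simp [hj'])]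
      simp only [altBlockDiag, Matrix.of_apply]
      rw [if_pos ⟨by omega, by omega, by omega⟩, if_pos (by omega : i.val / 2 = 0)]
      simp
    · rw [show (⟨i.val, hi⟩ : Fin 2) = 1 from Fin.ext (by simp [hi']),
        show (⟨j.val, hj⟩ : Fin 2) = 0 from Fin.ext (by simp [hj'])]
      simp only [altBlockDiag, Matrix.of_apply]
      rw [if_neg (by omega), if_pos ⟨by omega, by omega, by omega⟩,
        if_pos (by omega : j.val / 2 = 0)]
      simp
    · rw [show (⟨i.val, hi⟩ : Fin 2) = 1 from Fin.ext (by simp [hi']),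
        show (⟨j.val, hj⟩ : Fin 2) = 1 from Fin.ext (by simp [hj'])]
      simp only [altBlockDiag, Matrix.of_apply]
      rw [if_neg (by omega), if_neg (by omega)]
      simp
  · rw [dif_pos hi, dif_neg hj, Matrix.fromBlocks_apply₁₂]
    simp only [Matrix.zero_apply, altBlockDiag, Matrix.of_apply]
    split_ifs <;> first | omega | rfl
  · rw [dif_neg hi, dif_pos hj, Matrix.fromBlocks_apply₂₁]
    simp only [Matrix.zero_apply, altBlockDiag, Matrix.of_apply]
    split_ifs <;> first | omega | rfl
  · rw [dif_neg hi, dif_neg hj, Matrix.fromBlocks_apply₂₂]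
    simp only [altBlockDiag, Matrix.of_apply]
    split_ifs with h1 h2 h3 h4 <;>
      first
        | omega
        | rfl
        | (congr 2 <;> first | omega | (rw [if_neg (by omega : ¬ (i.val / 2 = 0))]; congr 1; omega))
        | (congr 3 <;> first | omega | (rw [if_neg (by omega : ¬ (j.val / 2 = 0))]; congr 1; omega))

def revFun (m r : ℕ) (hr : 2 * r ≤ m) : Fin m → Fin m := fun i =>
  if h : i.val < 2 * r then ⟨2 * r - 2 - 2 * (i.val / 2) + i.val % 2, by omega⟩ else i

lemma revFun_val (m r : ℕ) (hr : 2 * r ≤ m) (i : Fin m) :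
    (revFun m r hr i).val =
      if i.val < 2 * r then 2 * r - 2 - 2 * (i.val / 2) + i.val % 2 else i.val := by
  rw [revFun]
  split_ifs <;> rfl

lemma revFun_inv (m r : ℕ) (hr : 2 * r ≤ m) : Function.Involutive (revFun m r hr) := by
  intro i
  apply Fin.ext
  rw [revFun_val, revFun_val]
  split_ifs <;> omega

lemma revEq {F : Type} [Field F] (π : F) (m r : ℕ) (hr : 2 * r ≤ m) (lam₀ : ℕ → ℤ) :
    (altBlockDiag π m r lam₀).submatrix (revFun m r hr) (revFun m r hr) =
      altBlockDiag π m r (fun l => lam₀ (r - 1 - l)) := by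
  ext i j
  rw [Matrix.submatrix_apply]
  simp only [altBlockDiag, Matrix.of_apply]
  rw [show ((revFun m r hr i).val) = _ from revFun_val m r hr i,
    show ((revFun m r hr j).val) = _ from revFun_val m r hr j]
  split_ifs <;>
    first
      | rfl
      | (exfalso; omega)
      | (congr 2; omega)
      | (congr 3; omega)

set_option maxHeartbeats 1000000 in
lemma auxMain {F : Type} [Field F] (v : F → WithTop ℤ)
    (hv0 : ∀ x, v x = ⊤ ↔ x = 0)
    (hvmul : ∀ x y, v (x * y) = v x + v y)
    (hvadd : ∀ x y, min (v x) (v y) ≤ v (x + y))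
    (π : F) (hπ : v π = 1)
    (O : Subring F) (hO : ∀ x, x ∈ O ↔ 0 ≤ v x) :
    ∀ (m : ℕ) (A : Matrix (Fin m) (Fin m) F), AltM A →
    ∃ (U : Matrix (Fin m) (Fin m) F) (r : ℕ) (lam : ℕ → ℤ),
      IsGL O U ∧ 2 * r ≤ m ∧ (∀ i j, i ≤ j → j < r → lam i ≤ lam j) ∧
      U * A * U.transpose = altBlockDiag π m r lam := by
  have hπ0 : π ≠ 0 := by
    intro h; rw [h, (hv0 0).2 rfl] at hπ; exact (by simp : (⊤ : WithTop ℤ) ≠ 1) hπ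
  have h1O : (1 : F) ∈ O := O.one_mem
  intro m
  classical
  induction m using Nat.strong_induction_on with
  | _ m IH =>
  intro A hAalt
  by_cases hA : A = 0
  · refine ⟨1, 0, fun _ => 0, isgl_one O, by omega, fun i j _ h => by omega, ?_⟩
    subst hA
    ext i j
    simp only [Matrix.mul_zero, Matrix.zero_mul, Matrix.zero_apply, altBlockDiag,
      Matrix.of_apply]
    split_ifs <;> first | omega | rfl
  -- find entry of minimal valuation
  · have hS : (Finset.univ.filter fun p : Fin m × Fin m => A p.1 p.2 ≠ 0).Nonempty := by
      by_contra h
      apply hA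
      ext i j
      by_contra hij
      exact h ⟨(i, j), Finset.mem_filter.2 ⟨Finset.mem_univ _, hij⟩⟩
    obtain ⟨p₀, hp₀S, hp₀min⟩ := Finset.exists_min_image _ (fun p => v (A p.1 p.2)) hS
    have hA0 : A p₀.1 p₀.2 ≠ 0 := (Finset.mem_filter.1 hp₀S).2
    obtain ⟨d, hd⟩ : ∃ d : ℤ, v (A p₀.1 p₀.2) = (d : WithTop ℤ) := by
      have := (not_iff_not.2 (hv0 (A p₀.1 p₀.2))).2 hA0
      obtain ⟨b, hb⟩ := WithTop.ne_top_iff_exists.1 this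
      exact ⟨b, hb.symm⟩
    have hmin : ∀ i j, (d : WithTop ℤ) ≤ v (A i j) := by
      intro i j
      by_cases h : A i j = 0
      · rw [(hv0 _).2 h]; exact le_top
      · rw [← hd]
        exact hp₀min (i, j) (Finset.mem_filter.2 ⟨Finset.mem_univ _, h⟩)
    have hne : p₀.1 ≠ p₀.2 := by
      intro h
      exact hA0 (by rw [h]; exact hAalt.2 p₀.2)
    have hm2 : 2 ≤ m := by
      have : Nontrivial (Fin m) := ⟨p₀.1, p₀.2, hne⟩
      have := Fintype.one_lt_card_iff_nontrivial.2 this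
      simp at this; omega
    obtain ⟨n, rfl⟩ : ∃ n, m = 2 + n := ⟨m - 2, by omega⟩
    set e : Fin 2 ⊕ Fin n ≃ Fin (2 + n) := finSumFinEquiv with he
    set Ah : Matrix (Fin 2 ⊕ Fin n) (Fin 2 ⊕ Fin n) F := A.submatrix e e with hAh
    have hAhalt : AltM Ah := by
      constructor
      · ext i j
        have := congrFun (congrFun hAalt.1 (e i)) (e j)
        simpa [hAh, Matrix.transpose_apply] using this
      · intro i; exact hAalt.2 (e i)
    have hAhmin : ∀ i j, (d : WithTop ℤ) ≤ v (Ah i j) := fun i j => hmin _ _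
    -- permutation bringing the pivot to (inl 0, inl 1)
    set q1 : Fin 2 ⊕ Fin n := e.symm p₀.1 with hq1
    set q2 : Fin 2 ⊕ Fin n := e.symm p₀.2 with hq2
    have hq12 : q1 ≠ q2 := fun h => hne (by simpa [hq1, hq2] using congrArg e h)
    have hAhq : Ah q1 q2 = A p₀.1 p₀.2 := by simp [hAh, hq1, hq2]
    set s1 : Equiv.Perm (Fin 2 ⊕ Fin n) := Equiv.swap (Sum.inl 0) q1 with hs1
    set s2 : Equiv.Perm (Fin 2 ⊕ Fin n) := Equiv.swap (Sum.inl 1) (s1.symm q2) with hs2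
    have hq2ne : s1.symm q2 ≠ Sum.inl 0 := by
      intro h
      apply hq12
      have := congrArg s1 h
      rw [Equiv.apply_symm_apply, hs1, Equiv.swap_apply_left] at this
      exact this.symm
    have hσ0 : s1 (s2 (Sum.inl 0)) = q1 := by
      rw [hs2, Equiv.swap_apply_of_ne_of_ne (by simp) (Ne.symm hq2ne), hs1,
        Equiv.swap_apply_left]
    have hσ1 : s1 (s2 (Sum.inl 1)) = q2 := by
      rw [hs2, Equiv.swap_apply_left, Equiv.apply_symm_apply]
    set σ : Equiv.Perm (Fin 2 ⊕ Fin n) := s1 * s2 with hσ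
    set B : Matrix (Fin 2 ⊕ Fin n) (Fin 2 ⊕ Fin n) F := Ah.submatrix σ σ with hB
    have hcongAB : CongTo O Ah B := congto_perm O σ Ah
    have hBalt : AltM B := by
      constructor
      · ext i j
        have := congrFun (congrFun hAhalt.1 (σ i)) (σ j)
        simpa [hB, Matrix.transpose_apply] using this
      · intro i; exact hAhalt.2 (σ i)
    have hBmin : ∀ i j, (d : WithTop ℤ) ≤ v (B i j) := fun i j => hAhmin _ _
    have hB01 : B (Sum.inl 0) (Sum.inl 1) = A p₀.1 p₀.2 := by
      rw [hB, Matrix.submatrix_apply]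
      show Ah (s1 (s2 (Sum.inl 0))) (s1 (s2 (Sum.inl 1))) = _
      rw [hσ0, hσ1, hAhq]
    have hB01v : v (B (Sum.inl 0) (Sum.inl 1)) = (d : WithTop ℤ) := by rw [hB01, hd]
    have hB01ne : B (Sum.inl 0) (Sum.inl 1) ≠ 0 := by rw [hB01]; exact hA0
    -- scale
    set q : F := π ^ (d : ℤ) with hqdef
    have hqne : q ≠ 0 := zpow_ne_zero _ hπ0
    have hqv : v q = (d : WithTop ℤ) := vzpow v hv0 hvmul π hπ d
    have hqinv : q⁻¹ = π ^ (-d : ℤ) := by rw [hqdef, ← _root_.zpow_neg]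
    have hqinvv : v q⁻¹ = ((-d : ℤ) : WithTop ℤ) := by
      rw [hqinv]; exact vzpow v hv0 hvmul π hπ (-d)
    set u : F := B (Sum.inl 0) (Sum.inl 1) * q⁻¹ with hu
    have huv : v u = 0 := by
      rw [hu, hvmul, hB01v, hqinvv]
      exact_mod_cast by push_cast; ring
    have hune : u ≠ 0 := by
      intro h
      rw [h, (hv0 0).2 rfl] at huv
      exact (by simp : (⊤ : WithTop ℤ) ≠ 0) huv
    have huinvv : v u⁻¹ = 0 := by
      have := vinv v hv0 hvmul u hune
      rw [huv, add_zero] at this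
      exact this
    set g : Fin 2 ⊕ Fin n → F := fun i => if i = Sum.inl 0 then u⁻¹ else 1 with hg
    set g' : Fin 2 ⊕ Fin n → F := fun i => if i = Sum.inl 0 then u else 1 with hg'
    have hDgl : IsGL O (Matrix.diagonal g) := by
      refine ⟨?_, Matrix.diagonal g', ?_, ?_, ?_⟩
      · intro i j
        rw [Matrix.diagonal_apply]
        split_ifs with h
        · simp only [hg]
          split_ifs
          · exact (hO _).2 (le_of_eq huinvv.symm)
          · exact h1O
        · exact O.zero_mem
      · intro i j
        rw [Matrix.diagonal_apply]
        split_ifs with h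
        · simp only [hg']
          split_ifs
          · exact (hO _).2 (le_of_eq huv.symm)
          · exact h1O
        · exact O.zero_mem
      · rw [Matrix.diagonal_mul_diagonal,
          show (fun i => g i * g' i) = fun _ => (1 : F) from funext fun i => by
            simp only [hg, hg']
            split_ifs
            · exact inv_mul_cancel₀ hune
            · exact one_mul 1]
        exact Matrix.diagonal_one
      · rw [Matrix.diagonal_mul_diagonal,
          show (fun i => g' i * g i) = fun _ => (1 : F) from funext fun i => by
            simp only [hg, hg']
            split_ifs
            · exact mul_inv_cancel₀ hune
            · exact one_mul 1]
        exact Matrix.diagonal_one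
    set C : Matrix (Fin 2 ⊕ Fin n) (Fin 2 ⊕ Fin n) F :=
      Matrix.diagonal g * B * (Matrix.diagonal g)ᵀ with hC
    have hcongBC : CongTo O B C := ⟨Matrix.diagonal g, hDgl, rfl⟩
    have hCalt : AltM C := altm_conj hBalt _
    have hCapp : ∀ i j, C i j = g i * B i j * g j := by
      intro i j
      rw [hC, Matrix.diagonal_transpose, Matrix.mul_diagonal, Matrix.diagonal_mul]
    have hCmin : ∀ i j, (d : WithTop ℤ) ≤ v (C i j) := by
      refine vconj v hv0 hvmul hvadd O hO _ _ _ d ?_ ?_ hBmin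
      · exact hDgl.1
      · intro i j
        rw [Matrix.diagonal_transpose]
        exact hDgl.1 i j
    have hC01 : C (Sum.inl 0) (Sum.inl 1) = q := by
      rw [hCapp]
      simp only [hg, if_pos rfl, if_neg (by simp : (Sum.inl 1 : Fin 2 ⊕ Fin n) ≠ Sum.inl 0)]
      rw [hu]
      field_simp
    -- block structure of C
    have hC11 : C.toBlocks₁₁ = !![0, q; -q, 0] := by
      ext s t
      fin_cases s <;> fin_cases t
      · simpa [Matrix.toBlocks₁₁] using hCalt.2 (Sum.inl 0)
      · simpa [Matrix.toBlocks₁₁] using hC01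
      · have h := altm_entry hCalt (Sum.inl 0) (Sum.inl 1)
        rw [hC01] at h
        simpa [Matrix.toBlocks₁₁] using h
      · simpa [Matrix.toBlocks₁₁] using hCalt.2 (Sum.inl 1)
    set K : Matrix (Fin 2) (Fin 2) F := !![0, -q⁻¹; q⁻¹, 0] with hK
    have hKJ : K * !![0, q; -q, 0] = 1 := by
      ext s t
      fin_cases s <;> fin_cases t <;>
        simp [hK, Matrix.mul_apply, Fin.sum_univ_two, Matrix.one_apply, hqne,
          inv_mul_cancel₀]
    set X : Matrix (Fin n) (Fin 2) F := -C.toBlocks₂₁ * K with hX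
    have hXO : ∀ k t, X k t ∈ O := by
      intro k t
      rw [hO, hX, Matrix.mul_apply]
      refine vsum v hv0 hvadd _ _ _ fun s _ => ?_
      rw [hvmul]
      have h1 : (d : WithTop ℤ) ≤ v ((-C.toBlocks₂₁) k s) := by
        rw [Matrix.neg_apply, vneg v hv0 hvmul]
        exact hCmin (Sum.inr k) (Sum.inl s)
      have h2 : ((-d : ℤ) : WithTop ℤ) ≤ v (K s t) := by
        fin_cases s <;> fin_cases t <;> simp [hK] <;>
          first
            | (rw [(hv0 0).2 rfl]; exact le_top)
            | (rw [vneg v hv0 hvmul, hqinvv]; exact le_of_eq (by norm_cast))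
            | (rw [hqinvv]; exact le_of_eq (by norm_cast))
      calc (0 : WithTop ℤ) = (d : WithTop ℤ) + ((-d : ℤ) : WithTop ℤ) := by
            rw [← WithTop.coe_add]; norm_num
      _ ≤ _ := add_le_add h1 h2
    set E : Matrix (Fin 2 ⊕ Fin n) (Fin 2 ⊕ Fin n) F :=
      Matrix.fromBlocks (1 : Matrix (Fin 2) (Fin 2) F) 0 X 1 with hE
    have hEent : ∀ i j, E i j ∈ O := by
      intro i j
      cases i with
      | inl s =>
        cases j with
        | inl t =>
          rw [hE, Matrix.fromBlocks_apply₁₁, Matrix.one_apply]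
          split_ifs
          exacts [h1O, O.zero_mem]
        | inr t =>
          rw [hE, Matrix.fromBlocks_apply₁₂, Matrix.zero_apply]
          exact O.zero_mem
      | inr s =>
        cases j with
        | inl t =>
          rw [hE, Matrix.fromBlocks_apply₂₁]
          exact hXO s t
        | inr t =>
          rw [hE, Matrix.fromBlocks_apply₂₂, Matrix.one_apply]
          split_ifs
          exacts [h1O, O.zero_mem]
    have hEgl : IsGL O E := by
      refine ⟨hEent, Matrix.fromBlocks 1 0 (-X) 1, ?_, ?_, ?_⟩
      · intro i j
        cases i with
        | inl s =>
          cases j with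
          | inl t =>
            rw [Matrix.fromBlocks_apply₁₁, Matrix.one_apply]
            split_ifs
            exacts [h1O, O.zero_mem]
          | inr t =>
            rw [Matrix.fromBlocks_apply₁₂, Matrix.zero_apply]
            exact O.zero_mem
        | inr s =>
          cases j with
          | inl t =>
            rw [Matrix.fromBlocks_apply₂₁, Matrix.neg_apply]
            exact O.neg_mem (hXO s t)
          | inr t =>
            rw [Matrix.fromBlocks_apply₂₂, Matrix.one_apply]
            split_ifs
            exacts [h1O, O.zero_mem]
      · rw [hE, Matrix.fromBlocks_multiply]
        simp only [Matrix.one_mul, Matrix.mul_one, Matrix.mul_zero, Matrix.zero_mul,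
          Matrix.mul_neg, neg_zero, add_zero, zero_add, add_neg_cancel]
        exact Matrix.fromBlocks_one
      · rw [hE, Matrix.fromBlocks_multiply]
        simp only [Matrix.one_mul, Matrix.mul_one, Matrix.mul_zero, Matrix.zero_mul,
          Matrix.neg_mul, neg_zero, add_zero, zero_add, neg_add_cancel]
        exact Matrix.fromBlocks_one
    have hMalt : AltM (E * C * Eᵀ) := altm_conj hCalt E
    have hMf : E * C * Eᵀ =
        Matrix.fromBlocks C.toBlocks₁₁ (C.toBlocks₁₁ * Xᵀ + C.toBlocks₁₂) 0
          (X * C.toBlocks₁₂ + C.toBlocks₂₂) := by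
      have hXC : X * C.toBlocks₁₁ + C.toBlocks₂₁ = 0 := by
        rw [hX, hC11, Matrix.mul_assoc, hKJ, Matrix.mul_one, neg_add_cancel]
      conv_lhs => rw [← Matrix.fromBlocks_toBlocks C]
      rw [hE, Matrix.fromBlocks_transpose, Matrix.transpose_one, Matrix.transpose_zero,
        Matrix.fromBlocks_multiply, Matrix.fromBlocks_multiply]
      simp only [Matrix.one_mul, Matrix.mul_one, Matrix.mul_zero, Matrix.zero_mul,
        add_zero, zero_add]
      rw [hXC]
      simp only [Matrix.zero_mul, zero_add, Matrix.transpose_one, Matrix.mul_one]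
    have hM12 : C.toBlocks₁₁ * Xᵀ + C.toBlocks₁₂ = 0 := by
      ext s k
      have h := altm_entry hMalt (Sum.inr k) (Sum.inl s)
      rw [hMf] at h
      rw [Matrix.fromBlocks_apply₁₂] at h
      rw [show (Matrix.fromBlocks C.toBlocks₁₁
        (C.toBlocks₁₁ * Xᵀ + C.toBlocks₁₂) 0
        (X * C.toBlocks₁₂ + C.toBlocks₂₂)) (Sum.inr k) (Sum.inl s) = 0 from
          Matrix.fromBlocks_apply₂₁ _ _ _ _ _ _] at h
      rw [Matrix.zero_apply]
      rw [h, neg_zero]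
    set A2 : Matrix (Fin n) (Fin n) F := X * C.toBlocks₁₂ + C.toBlocks₂₂ with hA2
    have hMf2 : E * C * Eᵀ = Matrix.fromBlocks C.toBlocks₁₁ 0 0 A2 := by
      rw [hMf, hM12]
    have hA2alt : AltM A2 := by
      constructor
      · ext k l
        have h := altm_entry hMalt (Sum.inr k) (Sum.inr l)
        rw [hMf2, Matrix.fromBlocks_apply₂₂, Matrix.fromBlocks_apply₂₂] at h
        rw [Matrix.transpose_apply, Matrix.neg_apply]
        exact h
      · intro k
        have h := hMalt.2 (Sum.inr k)
        rw [hMf2, Matrix.fromBlocks_apply₂₂] at h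
        exact h
    have hA2min : ∀ k l, (d : WithTop ℤ) ≤ v (A2 k l) := by
      have hvc := vconj v hv0 hvmul hvadd O hO E C Eᵀ d hEent
        (fun i j => by rw [Matrix.transpose_apply]; exact hEent j i) hCmin
      intro k l
      have h := hvc (Sum.inr k) (Sum.inr l)
      rw [hMf2, Matrix.fromBlocks_apply₂₂] at h
      exact h
    obtain ⟨U', r', lam', hU'gl, hr', hmono', heq'⟩ := IH n (by omega) A2 hA2alt
    have hlb : ∀ l, l < r' → d ≤ lam' l := by
      intro l hl
      have hjlt : 2 * l + 1 < n := by omega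
      have hval : altBlockDiag π n r' lam' ⟨2 * l, by omega⟩ ⟨2 * l + 1, hjlt⟩ =
          π ^ lam' l := by
        show (if 2 * l + 1 = 2 * l + 1 ∧ 2 * l + 1 < 2 * r' ∧ 2 * l % 2 = 0
            then π ^ lam' (2 * l / 2)
            else if (2 * l + 1) + 1 = 2 * l ∧ 2 * l < 2 * r' ∧ (2 * l + 1) % 2 = 0
              then -π ^ lam' ((2 * l + 1) / 2) else 0) = π ^ lam' l
        rw [if_pos ⟨rfl, by omega, by omega⟩, show 2 * l / 2 = l by omega]
      have h2 := vconj v hv0 hvmul hvadd O hO U' A2 U'ᵀ d hU'gl.1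
        (fun i j => by rw [Matrix.transpose_apply]; exact hU'gl.1 j i) hA2min
        ⟨2 * l, by omega⟩ ⟨2 * l + 1, hjlt⟩
      rw [heq', hval, vzpow v hv0 hvmul π hπ] at h2
      exact_mod_cast h2
    set Uh : Matrix (Fin 2 ⊕ Fin n) (Fin 2 ⊕ Fin n) F :=
      Matrix.fromBlocks (1 : Matrix (Fin 2) (Fin 2) F) 0 0 U' with hUh
    obtain ⟨hU'O, V', hV'O, hUV', hVU'⟩ := hU'gl
    have honeblk : ∀ (Y : Matrix (Fin n) (Fin n) F), (∀ i j, Y i j ∈ O) →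
        ∀ (i j : Fin 2 ⊕ Fin n),
          (Matrix.fromBlocks (1 : Matrix (Fin 2) (Fin 2) F) 0 0 Y) i j ∈ O := by
      intro Y hY i j
      cases i with
      | inl s =>
        cases j with
        | inl t =>
          rw [Matrix.fromBlocks_apply₁₁, Matrix.one_apply]
          split_ifs
          exacts [h1O, O.zero_mem]
        | inr t =>
          rw [Matrix.fromBlocks_apply₁₂, Matrix.zero_apply]
          exact O.zero_mem
      | inr s =>
        cases j with
        | inl t =>
          rw [Matrix.fromBlocks_apply₂₁, Matrix.zero_apply]
          exact O.zero_mem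
        | inr t =>
          rw [Matrix.fromBlocks_apply₂₂]
          exact hY s t
    have hUhgl : IsGL O Uh := by
      refine ⟨honeblk U' hU'O, Matrix.fromBlocks 1 0 0 V', honeblk V' hV'O, ?_, ?_⟩
      · rw [hUh, Matrix.fromBlocks_multiply]
        simp only [Matrix.one_mul, Matrix.mul_one, Matrix.mul_zero, Matrix.zero_mul,
          add_zero, zero_add, hUV']
        exact Matrix.fromBlocks_one
      · rw [hUh, Matrix.fromBlocks_multiply]
        simp only [Matrix.one_mul, Matrix.mul_one, Matrix.mul_zero, Matrix.zero_mul,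
          add_zero, zero_add, hVU']
        exact Matrix.fromBlocks_one
    have hcongCM : CongTo O C (Matrix.fromBlocks C.toBlocks₁₁ 0 0 A2) := ⟨E, hEgl, hMf2⟩
    have hcongMD : CongTo O (Matrix.fromBlocks C.toBlocks₁₁ 0 0 A2)
        (Matrix.fromBlocks C.toBlocks₁₁ 0 0 (altBlockDiag π n r' lam')) := by
      refine ⟨Uh, hUhgl, ?_⟩
      rw [hUh, Matrix.fromBlocks_transpose, Matrix.transpose_one, Matrix.transpose_zero,
        Matrix.fromBlocks_multiply, Matrix.fromBlocks_multiply]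
      simp only [Matrix.one_mul, Matrix.mul_one, Matrix.mul_zero, Matrix.zero_mul,
        add_zero, zero_add]
      rw [heq']
      simp only [Matrix.transpose_zero, Matrix.mul_zero]
    have hchain : CongTo O Ah
        (Matrix.fromBlocks C.toBlocks₁₁ 0 0 (altBlockDiag π n r' lam')) :=
      congto_trans (congto_trans (congto_trans hcongAB hcongBC) hcongCM) hcongMD
    obtain ⟨W, ⟨hWO, VW, hVWO, hWV1, hWV2⟩, hWeq⟩ := hchain
    have hsub_mul : ∀ P Q : Matrix (Fin 2 ⊕ Fin n) (Fin 2 ⊕ Fin n) F,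
        P.submatrix ⇑e.symm ⇑e.symm * Q.submatrix ⇑e.symm ⇑e.symm =
          (P * Q).submatrix ⇑e.symm ⇑e.symm :=
      fun P Q => Matrix.submatrix_mul_equiv P Q ⇑e.symm e.symm ⇑e.symm
    refine ⟨W.submatrix ⇑e.symm ⇑e.symm, r' + 1,
      (fun l => if l = 0 then d else lam' (l - 1)),
      ⟨fun i j => hWO _ _, VW.submatrix ⇑e.symm ⇑e.symm, fun i j => hVWO _ _, ?_, ?_⟩,
      by omega, ?_, ?_⟩
    · rw [hsub_mul, hWV1, Matrix.submatrix_one_equiv]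
    · rw [hsub_mul, hWV2, Matrix.submatrix_one_equiv]
    · intro i j hij hjr
      show (if i = 0 then d else lam' (i - 1)) ≤ (if j = 0 then d else lam' (j - 1))
      split_ifs with h1 h2 h3
      · exact le_refl d
      · exact hlb (j - 1) (by omega)
      · omega
      · exact hmono' (i - 1) (j - 1) (by omega) (by omega)
    · have hAeq : A = Ah.submatrix ⇑e.symm ⇑e.symm := by
        rw [hAh, Matrix.submatrix_submatrix]
        ext i j
        simp
      rw [hAeq, show (W.submatrix ⇑e.symm ⇑e.symm)ᵀ = Wᵀ.submatrix ⇑e.symm ⇑e.symm from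
        Matrix.transpose_submatrix W ⇑e.symm ⇑e.symm, hsub_mul, hsub_mul, hWeq, hC11]
      exact blockEq π n r' d lam' hr'

/-- Smith normal form of an alternating matrix over the fraction field `F` of a
discrete valuation ring `O` (with uniformizer `π` and valuation `v`, `O = {x | v x ≥ 0}`):
there are `U ∈ GL_m(O)`, `r` with `2r ≤ m` and integers `λ₁ ≥ … ≥ λ_r` with
`U·A·Uᵀ = diag(J(λ₁), …, J(λ_r), 0)`; moreover if `m` is even and `det A ≠ 0` then `2r = m`. -/
theorem stmt0 {F : Type} [Field F] (v : F → WithTop ℤ)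
    (hv0 : ∀ x, v x = ⊤ ↔ x = 0)
    (hvmul : ∀ x y, v (x * y) = v x + v y)
    (hvadd : ∀ x y, min (v x) (v y) ≤ v (x + y))
    (π : F) (hπ : v π = 1)
    (O : Subring F) (hO : ∀ x, x ∈ O ↔ 0 ≤ v x)
    (m : ℕ) (A : Matrix (Fin m) (Fin m) F)
    (hAalt : A.transpose = -A) (hAdiag : ∀ i, A i i = 0) :
    ∃ (U : Matrix (Fin m) (Fin m) F) (r : ℕ) (lam : ℕ → ℤ),
      (∀ i j, U i j ∈ O) ∧
      (∃ V : Matrix (Fin m) (Fin m) F, (∀ i j, V i j ∈ O) ∧ U * V = 1 ∧ V * U = 1) ∧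
      2 * r ≤ m ∧
      (∀ i j, i ≤ j → j < r → lam j ≤ lam i) ∧
      U * A * U.transpose = altBlockDiag π m r lam ∧
      (m % 2 = 0 → A.det ≠ 0 → 2 * r = m) := by
  obtain ⟨U₀, r, lam₀, hgl, hr, hmono, heq⟩ :=
    auxMain v hv0 hvmul hvadd π hπ O hO m A ⟨hAalt, hAdiag⟩
  obtain ⟨Uf, hglf, heqf⟩ := congto_trans (O := O) ⟨U₀, hgl, heq⟩
    (congto_perm O ((revFun_inv m r hr).toPerm) (altBlockDiag π m r lam₀))
  have heq2 : Uf * A * Ufᵀ = altBlockDiag π m r (fun l => lam₀ (r - 1 - l)) :=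
    heqf.trans (revEq π m r hr lam₀)
  obtain ⟨hUfO, V, hVO, hUV, hVU⟩ := hglf
  refine ⟨Uf, r, _, hUfO, ⟨V, hVO, hUV, hVU⟩, hr, ?_, heq2, ?_⟩
  · intro i j hij hjr
    exact hmono (r - 1 - j) (r - 1 - i) (by omega) (by omega)
  · intro _ hdet
    by_contra h2r
    have h2r' : 2 * r < m := by omega
    have hrow : ∀ (i j : Fin m), 2 * r ≤ i.val →
        altBlockDiag π m r (fun l => lam₀ (r - 1 - l)) i j = 0 := by
      intro i j hi
      simp only [altBlockDiag, Matrix.of_apply]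
      split_ifs with h1 h2
      · exact absurd h1 (by omega)
      · exact absurd h2 (by omega)
      · rfl
    have hdet0 : (altBlockDiag π m r (fun l => lam₀ (r - 1 - l))).det = 0 :=
      Matrix.det_eq_zero_of_row_eq_zero ⟨2 * r, h2r'⟩ (fun j => hrow _ j (le_refl _))
    rw [← heq2, Matrix.det_mul, Matrix.det_mul, Matrix.det_transpose] at hdet0
    have hdU : Uf.det * V.det = 1 := by rw [← Matrix.det_mul, hUV, Matrix.det_one]
    have h3 : Uf.det ≠ 0 := left_ne_zero_of_mul_eq_one hdU
    rcases mul_eq_zero.1 hdet0 with h5 | h5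
    · rcases mul_eq_zero.1 h5 with h6 | h6
      · exact h3 h6
      · exact hdet h6
    · exact h3 h5
end

section
/- Let A ∈ M_n(E) satisfy A* = A and det A ≠ 0. Then there exist U ∈ GL_n(𝔬) and integers λ_1 ≥ λ_2 ≥ … ≥ λ_n such that U·A·U* = diag(π^{λ_1}, π^{λ_2}, …, π^{λ_n}). -/
structure Loc (E : Type) [Field E] where
  v : E → WithTop ℤ
  hv0 : ∀ x, v x = ⊤ ↔ x = 0
  hvmul : ∀ x y, v (x * y) = v x + v y
  hvadd : ∀ x y, min (v x) (v y) ≤ v (x + y)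
  pi : E
  hπ : v pi = 1
  O : Subring E
  hO : ∀ x, x ∈ O ↔ 0 ≤ v x
  σ : E →+* E
  hσinv : ∀ x, σ (σ x) = x
  hσO : ∀ x ∈ O, σ x ∈ O
  hσπ : σ pi = pi
  hσres : ∃ x ∈ O, v (σ x - x) ≤ 0
  hcomplete : ∀ f : ℕ → E,
      (∀ N : ℤ, ∃ M : ℕ, ∀ m₁ m₂ : ℕ, M ≤ m₁ → M ≤ m₂ → (N : WithTop ℤ) ≤ v (f m₁ - f m₂)) →
      ∃ L : E, ∀ N : ℤ, ∃ M : ℕ, ∀ m₁ : ℕ, M ≤ m₁ → (N : WithTop ℤ) ≤ v (f m₁ - L)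
  hfinres : ∃ S : Finset E, ∀ x ∈ O, ∃ y ∈ S, (1 : WithTop ℤ) ≤ v (x - y)

namespace Loc

variable {E : Type} [Field E] (L : Loc E)

lemma vne_top {x : E} (hx : x ≠ 0) : L.v x ≠ ⊤ := fun h => hx ((L.hv0 x).1 h)

lemma v0 : L.v 0 = ⊤ := (L.hv0 0).2 rfl

lemma ex_int {x : E} (hx : x ≠ 0) : ∃ k : ℤ, L.v x = (k : WithTop ℤ) :=
  WithTop.ne_top_iff_exists.1 (L.vne_top hx) |>.imp (fun _ h => h.symm)

lemma v1 : L.v 1 = 0 := by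
  obtain ⟨k, hk⟩ := L.ex_int (one_ne_zero (α := E))
  have h := L.hvmul 1 1
  rw [one_mul, hk] at h
  have h2 : (k : WithTop ℤ) = (k + k : ℤ) := by rw [h]; push_cast; rfl
  have : k = k + k := by exact_mod_cast h2
  have hk0 : k = 0 := by omega
  rw [hk, hk0]; rfl

lemma vneg (x : E) : L.v (-x) = L.v x := by
  have hm1 : L.v (-1 : E) = 0 := by
    obtain ⟨k, hk⟩ := L.ex_int (neg_ne_zero.2 (one_ne_zero (α := E)))
    have h := L.hvmul (-1) (-1)
    rw [neg_mul_neg, one_mul, L.v1, hk] at h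
    have h2 : (0 : WithTop ℤ) = ((k + k : ℤ) : WithTop ℤ) := by rw [h]; push_cast; rfl
    have : (0:ℤ) = k + k := by exact_mod_cast h2
    have hk0 : k = 0 := by omega
    rw [hk, hk0]; rfl
  calc L.v (-x) = L.v ((-1) * x) := by ring_nf
    _ = L.v x := by rw [L.hvmul, hm1, zero_add]

lemma vinv {x : E} (hx : x ≠ 0) : L.v x⁻¹ = - L.v x := by
  obtain ⟨k, hk⟩ := L.ex_int hx
  obtain ⟨m, hm⟩ := L.ex_int (inv_ne_zero hx)
  have h := L.hvmul x x⁻¹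
  rw [mul_inv_cancel₀ hx, L.v1, hk, hm] at h
  have h2 : (0 : WithTop ℤ) = ((k + m : ℤ) : WithTop ℤ) := by rw [h]; push_cast; rfl
  have h3 : (0:ℤ) = k + m := by exact_mod_cast h2
  have hmk : m = -k := by omega
  rw [hk, hm, hmk]
  rfl

lemma v_add_eq_left {x y : E} (h : L.v x < L.v y) : L.v (x + y) = L.v x := by
  have h1 : L.v x ≤ L.v (x + y) := by
    have := L.hvadd x y
    rwa [min_eq_left h.le] at this
  rcases lt_or_eq_of_le h1 with h2 | h2
  · exfalso
    have h3 := L.hvadd (x + y) (-y)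
    rw [add_neg_cancel_right, L.vneg] at h3
    have : L.v x < min (L.v (x+y)) (L.v y) := lt_min h2 h
    exact absurd (lt_of_lt_of_le this h3) (lt_irrefl _)
  · exact h2.symm

lemma v_sub_comm (x y : E) : L.v (x - y) = L.v (y - x) := by
  rw [← L.vneg (x - y)]; ring_nf

lemma pi_ne_zero : L.pi ≠ 0 := by
  intro h
  have := L.hπ
  rw [h, L.v0] at this
  exact (by simp : (⊤ : WithTop ℤ) ≠ 1) this

lemma v_pow (k : ℕ) : L.v (L.pi ^ k) = ((k : ℤ) : WithTop ℤ) := by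
  induction k with
  | zero => simpa using L.v1
  | succ m ih =>
    rw [pow_succ, L.hvmul, ih, L.hπ]
    have : ((m:ℤ) : WithTop ℤ) + 1 = (((m:ℤ) + 1 : ℤ) : WithTop ℤ) := by push_cast; rfl
    rw [this]
    norm_cast

lemma v_zpow (k : ℤ) : L.v (L.pi ^ k) = (k : WithTop ℤ) := by
  rcases k with k | k
  · rw [Int.ofNat_eq_coe, zpow_natCast, L.v_pow]
  · rw [zpow_negSucc, L.vinv (pow_ne_zero _ L.pi_ne_zero), L.v_pow]
    rfl

lemma mem_O {x : E} : x ∈ L.O ↔ 0 ≤ L.v x := L.hO x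

lemma unit_mem {x : E} (hx : L.v x = 0) : x ∈ L.O := by rw [L.mem_O, hx]

lemma unit_ne_zero {x : E} (hx : L.v x = 0) : x ≠ 0 := by
  intro h; rw [h, L.v0] at hx; exact (by simp : (⊤ : WithTop ℤ) ≠ 0) hx

lemma unit_inv_mem {x : E} (hx : L.v x = 0) : x⁻¹ ∈ L.O := by
  rw [L.mem_O, L.vinv (L.unit_ne_zero hx), hx]; simp

lemma v_unit_mul {x y : E} (hx : L.v x = 0) : L.v (x * y) = L.v y := by
  rw [L.hvmul, hx, zero_add]

/-- σ preserves the valuation. -/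
lemma vσ (x : E) : L.v (L.σ x) = L.v x := by
  rcases eq_or_ne x 0 with h | h
  · rw [h, map_zero]
  · obtain ⟨k, hk⟩ := L.ex_int h
    set y := x * L.pi ^ (-k) with hy
    have hvy : L.v y = 0 := by
      rw [hy, L.hvmul, L.v_zpow, hk]
      have : (k : WithTop ℤ) + ((-k : ℤ) : WithTop ℤ) = ((k + -k : ℤ) : WithTop ℤ) := by
        push_cast; rfl
      rw [this]
      norm_num
    have hy0 : y ≠ 0 := L.unit_ne_zero hvy
    have h1 : L.σ y ∈ L.O := L.hσO y (L.unit_mem hvy)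
    have h2 : L.σ y⁻¹ ∈ L.O := L.hσO y⁻¹ (L.unit_inv_mem hvy)
    have h3 : L.σ y * L.σ y⁻¹ = 1 := by
      rw [← map_mul, mul_inv_cancel₀ hy0, map_one]
    have hσy0 : L.σ y ≠ 0 := fun hh => by
      rw [hh, zero_mul] at h3; exact one_ne_zero h3.symm
    have hσyi0 : L.σ y⁻¹ ≠ 0 := fun hh => by
      rw [hh, mul_zero] at h3; exact one_ne_zero h3.symm
    have h4 : L.v (L.σ y) = 0 := by
      obtain ⟨a, ha⟩ := L.ex_int hσy0
      obtain ⟨b, hb⟩ := L.ex_int hσyi0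
      have a3 : L.v (L.σ y) + L.v (L.σ y⁻¹) = 0 := by rw [← L.hvmul, h3, L.v1]
      rw [ha, hb] at a3
      have e3 : ((a + b : ℤ) : WithTop ℤ) = ((0:ℤ) : WithTop ℤ) := by push_cast; rw [← a3]
      have e3' : a + b = (0:ℤ) := by exact_mod_cast e3
      have a1 : (0 : WithTop ℤ) ≤ (a : WithTop ℤ) := ha ▸ L.mem_O.1 h1
      have a2 : (0 : WithTop ℤ) ≤ (b : WithTop ℤ) := hb ▸ L.mem_O.1 h2
      have e1 : (0:ℤ) ≤ a := by exact_mod_cast a1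
      have e2 : (0:ℤ) ≤ b := by exact_mod_cast a2
      have : a = 0 := by omega
      rw [ha, this]; rfl
    have hσpow : L.σ (L.pi ^ (-k)) = L.pi ^ (-k) := by
      rw [map_zpow₀, L.hσπ]
    have hσx : L.σ x = L.σ y * L.pi ^ k := by
      rw [hy, map_mul, hσpow, mul_assoc, ← zpow_add₀ L.pi_ne_zero]
      simp
    rw [hσx, L.hvmul, h4, zero_add, L.v_zpow, hk]

lemma σ_ne_zero {x : E} (hx : x ≠ 0) : L.σ x ≠ 0 := by
  intro h
  have := L.vσ x
  rw [h, L.v0] at this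
  exact L.vne_top hx this.symm

/-- sum bound : valuation of a finite sum -/
lemma v_sum_ge {ι : Type*} (s : Finset ι) (f : ι → E) (μ : WithTop ℤ)
    (h : ∀ i ∈ s, μ ≤ L.v (f i)) : μ ≤ L.v (∑ i ∈ s, f i) := by
  classical
  induction s using Finset.induction with
  | empty => simp [L.v0]
  | @insert a s' hne ih =>
    rw [Finset.sum_insert hne]
    refine le_trans (le_min (h a (Finset.mem_insert_self a s'))
      (ih (fun i hi => h i (Finset.mem_insert_of_mem hi)))) (L.hvadd _ _)

end Loc

section FieldLemmas

variable {R : Type*} [Field R]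

/-- Trace surjectivity onto the fixed field, for any field with involution. -/
lemma field_trace_surj (τ : R →+* R) (hττ : ∀ x, τ (τ x) = x) (hτ : τ ≠ RingHom.id R) :
    ∀ y : R, τ y = y → ∃ z : R, z + τ z = y := by
  have hex : ∃ z₀ : R, z₀ + τ z₀ ≠ 0 := by
    by_contra hall
    push_neg at hall
    have hneg : ∀ z, τ z = -z := fun z => by
      have := hall z; linear_combination this
    have h2 : (2 : R) = 0 := by
      have := hneg 1
      rw [map_one] at this
      linear_combination this
    apply hτ
    ext z
    have : -z = z := by linear_combination -z * h2
    rw [hneg z, this, RingHom.id_apply]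
  obtain ⟨z₀, ht₀⟩ := hex
  set t₀ := z₀ + τ z₀ with htdef
  have hfix : τ t₀ = t₀ := by rw [htdef, map_add, hττ, add_comm]
  intro y hy
  refine ⟨t₀⁻¹ * y * z₀, ?_⟩
  have hτz : τ (t₀⁻¹ * y * z₀) = t₀⁻¹ * y * τ z₀ := by
    rw [map_mul, map_mul, map_inv₀, hfix, hy]
  rw [hτz, ← mul_add, ← htdef]
  field_simp

/-- Norm surjectivity onto nonzero fixed elements, for a finite field with involution. -/
lemma finite_field_norm_surj [Finite R] (τ : R →+* R) (hττ : ∀ x, τ (τ x) = x)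
    (hτ : τ ≠ RingHom.id R) :
    ∀ y : R, y ≠ 0 → τ y = y → ∃ z : R, z * τ z = y := by
  classical
  cases nonempty_fintype R
  -- the fixed subfield
  let F : Subfield R :=
    { carrier := {x | τ x = x}
      mul_mem' := fun {a b} ha hb => by simp only [Set.mem_setOf_eq, map_mul] at *; rw [ha, hb]
      one_mem' := by simp only [Set.mem_setOf_eq, map_one]
      add_mem' := fun {a b} ha hb => by simp only [Set.mem_setOf_eq, map_add] at *; rw [ha, hb]
      zero_mem' := by simp only [Set.mem_setOf_eq, map_zero]
      neg_mem' := fun {a} ha => by simp only [Set.mem_setOf_eq, map_neg] at *; rw [ha]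
      inv_mem' := fun a ha => by simp only [Set.mem_setOf_eq, map_inv₀] at *; rw [ha] }
  have hFmem : ∀ x : R, x ∈ F ↔ τ x = x := fun x => Iff.rfl
  set q := Fintype.card F with hq
  have hq2 : 2 ≤ q := Fintype.one_lt_card
  -- generator of units
  obtain ⟨g, hg⟩ := IsCyclic.exists_generator (α := Rˣ)
  have hgord : orderOf g = Fintype.card Rˣ := by
    rw [← Nat.card_eq_fintype_card]
    exact orderOf_eq_card_of_forall_mem_zpowers hg
  have hpow : ∀ x : R, x ≠ 0 → ∃ k : ℕ, x = (g : R) ^ k := by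
    intro x hx
    have hmem : (Units.mk0 x hx) ∈ Submonoid.powers g := by
      rw [mem_powers_iff_mem_zpowers]
      exact hg _
    obtain ⟨k, hk⟩ := hmem
    refine ⟨k, ?_⟩
    have := congrArg (Units.val) hk
    simpa using this.symm
  -- trace and norm of g
  set t : R := (g : R) + τ g with htdef
  set nm : R := (g : R) * τ g with hnmdef
  have htF : τ t = t := by rw [htdef, map_add, hττ, add_comm]
  have hnmF : τ nm = nm := by rw [hnmdef, map_mul, hττ, mul_comm]
  have hquad : ∀ r : R, r * r - t * r + nm = (r - (g:R)) * (r - τ g) := by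
    intro r; rw [htdef, hnmdef]; ring
  have hg2 : (g:R) * (g:R) - t * (g:R) + nm = 0 := by
    rw [hquad]; simp
  -- R = F + F g
  have hspan : ∀ x : R, ∃ c d : R, τ c = c ∧ τ d = d ∧ x = c + d * (g : R) := by
    have hpows : ∀ k : ℕ, ∃ c d : R, τ c = c ∧ τ d = d ∧ (g:R) ^ k = c + d * (g : R) := by
      intro k
      induction k with
      | zero => exact ⟨1, 0, map_one τ, map_zero τ, by ring⟩
      | succ m ih =>
        obtain ⟨c, d, hc, hd, hcd⟩ := ih
        refine ⟨-(d * nm), c + d * t, ?_, ?_, ?_⟩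
        · rw [map_neg, map_mul, hd, hnmF]
        · rw [map_add, map_mul, hc, hd, htF]
        · rw [pow_succ, hcd]
          linear_combination d * hg2
    intro x
    rcases eq_or_ne x 0 with rfl | hx
    · exact ⟨0, 0, map_zero τ, map_zero τ, by ring⟩
    obtain ⟨k, hk⟩ := hpow x hx
    obtain ⟨c, d, hc, hd, hcd⟩ := hpows k
    exact ⟨c, d, hc, hd, hk ▸ hcd⟩
  -- τ g ≠ g
  have hτg : τ g ≠ (g : R) := by
    intro h
    apply hτ
    ext x
    obtain ⟨c, d, hc, hd, hcd⟩ := hspan x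
    rw [RingHom.id_apply, hcd, map_add, map_mul, hc, hd, h]
  -- cardinality: |R| = q^2
  have hcardR : Fintype.card R = q * q := by
    have hbij : Function.Bijective (fun p : F × F => (p.1 : R) + (p.2 : R) * (g : R)) := by
      constructor
      · rintro ⟨c₁, d₁⟩ ⟨c₂, d₂⟩ h
        simp only at h
        by_cases hd : (d₁ : R) = (d₂ : R)
        · have hcc : (c₁ : R) = (c₂ : R) := by
            have := h; rw [hd] at this; exact add_right_cancel this
          have : c₁ = c₂ := Subtype.ext hcc
          have : d₁ = d₂ := Subtype.ext hd
          simp_all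
        · exfalso
          apply hτg
          have hgval : (g : R) = ((c₁ : R) - c₂) / ((d₂ : R) - d₁) := by
            field_simp [sub_ne_zero.2 (Ne.symm hd)]
            linear_combination -h
          rw [hgval, map_div₀, map_sub, map_sub, c₁.2, c₂.2, d₁.2, d₂.2]
        -- done
      · intro x
        obtain ⟨c, d, hc, hd, hcd⟩ := hspan x
        exact ⟨(⟨c, hc⟩, ⟨d, hd⟩), hcd.symm⟩
    calc Fintype.card R = Fintype.card (F × F) := (Fintype.card_of_bijective hbij).symm
      _ = q * q := by rw [Fintype.card_prod]
  have hcardU : Fintype.card Rˣ = q * q - 1 := by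
    rw [Fintype.card_units, hcardR]
  -- characteristic and Frobenius
  obtain ⟨p, hp⟩ := CharP.exists F
  haveI : CharP F p := hp
  obtain ⟨f, hpprime, hcardF⟩ := FiniteField.card F p
  haveI : CharP R p := charP_of_injective_ringHom (RingHom.injective F.subtype) p
  haveI : Fact p.Prime := ⟨hpprime⟩
  let φ : R →+* R := iterateFrobenius R p f
  have hφ : ∀ x : R, φ x = x ^ q := by
    intro x
    rw [hq, hcardF]
    rfl
  have hφF : ∀ x : R, τ x = x → φ x = x := by
    intro x hx
    have : (⟨x, hx⟩ : F) ^ q = ⟨x, hx⟩ := FiniteField.pow_card _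
    have h2 := congrArg (Subtype.val) this
    push_cast at h2
    rw [hφ]
    exact_mod_cast h2
  -- g^q ≠ g
  have hgq : (g : R) ^ q ≠ (g : R) := by
    intro h
    have hu : g ^ q = g := Units.ext (by push_cast; exact h)
    have h3 : g ^ (q - 1) = 1 := by
      have h2 : g ^ (q - 1) * g = 1 * g := by
        rw [← pow_succ, one_mul]
        have hq1 : q - 1 + 1 = q := by omega
        rw [hq1, hu]
      exact mul_right_cancel h2
    have hdvd : orderOf g ∣ q - 1 := orderOf_dvd_of_pow_eq_one h3
    rw [hgord, hcardU] at hdvd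
    have hle : q * q - 1 ≤ q - 1 := Nat.le_of_dvd (by omega) hdvd
    have h2q : 2 * q ≤ q * q := Nat.mul_le_mul_right q hq2
    omega
  -- φ g = τ g
  have hφg : (g : R) ^ q = τ g := by
    have h0 : φ ((g:R) * (g:R) - t * (g:R) + nm) = 0 := by rw [hg2, map_zero]
    rw [map_add, map_sub, map_mul, map_mul, hφF t htF, hφF nm hnmF, hφ] at h0
    have h1 : ((g:R)^q - (g:R)) * ((g:R)^q - τ g) = 0 := by
      rw [← hquad]; linear_combination h0
    rcases mul_eq_zero.1 h1 with h2 | h2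
    · exact absurd (sub_eq_zero.1 h2) hgq
    · exact sub_eq_zero.1 h2
  -- τ is the q-power map
  have hτpow : ∀ x : R, τ x = x ^ q := by
    intro x
    obtain ⟨c, d, hc, hd, hcd⟩ := hspan x
    have : φ x = c + d * (g:R)^q := by
      rw [hcd, map_add, map_mul, hφF c hc, hφF d hd, hφ (g:R)]
    rw [← hφ x, this, hφg, hcd, map_add, map_mul, hc, hd]
  -- conclusion
  intro y hy0 hy
  obtain ⟨k, hk⟩ := hpow y hy0
  have hyq : (g:R) ^ (k * q) = (g:R) ^ k := by
    rw [pow_mul, ← hk, ← hτpow y, hy]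
  have hu : g ^ (k * q) = g ^ k := Units.ext (by push_cast; exact hyq)
  have hmod : k * q ≡ k [MOD orderOf g] := (pow_eq_pow_iff_modEq).1 hu
  have hdvd : ((q*q - 1 : ℕ) : ℤ) ∣ ((k*q : ℕ) : ℤ) - ((k:ℕ) : ℤ) := by
    rw [← hcardU, ← hgord]
    have h := hmod.dvd
    have := (dvd_neg (α := ℤ)).2 h
    simpa using this
  have hdvd2 : ((q + 1 : ℕ) : ℤ) ∣ (k : ℤ) := by
    have hfac : ((q*q - 1 : ℕ) : ℤ) = ((q:ℤ) - 1) * ((q:ℤ) + 1) := by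
      push_cast [Nat.cast_sub (by nlinarith : 1 ≤ q*q)]
      ring
    have hkq : ((k*q : ℕ) : ℤ) - (k:ℕ) = (k:ℤ) * ((q:ℤ) - 1) := by push_cast; ring
    rw [hfac, hkq] at hdvd
    have hq1 : ((q:ℤ) - 1) ≠ 0 := by
      have : (2:ℤ) ≤ q := by exact_mod_cast hq2
      omega
    obtain ⟨c, hc⟩ := hdvd
    refine ⟨c, ?_⟩
    have : (k:ℤ) * ((q:ℤ) - 1) = (((q:ℤ) + 1) * c) * ((q:ℤ) - 1) := by
      rw [hc]; ring
    have := mul_right_cancel₀ hq1 this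
    push_cast
    linarith [this]
  obtain ⟨c, hc⟩ := (Int.natCast_dvd_natCast).1 hdvd2
  refine ⟨(g:R) ^ c, ?_⟩
  rw [hτpow, ← pow_mul, ← pow_add, hk, hc]
  congr 1
  ring
end FieldLemmas

namespace Loc

variable {E : Type} [Field E] (L : Loc E)

/-- The maximal ideal of O. -/
def I : Ideal L.O where
  carrier := {x | (1 : WithTop ℤ) ≤ L.v x.val}
  add_mem' := fun {a b} ha hb => by
    simp only [Set.mem_setOf_eq] at *
    exact le_trans (le_min ha hb) (L.hvadd _ _)
  zero_mem' := by
    simp only [Set.mem_setOf_eq]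
    have : L.v ((0 : L.O) : E) = ⊤ := L.v0
    rw [this]; exact le_top
  smul_mem' := fun c x hx => by
    simp only [Set.mem_setOf_eq, smul_eq_mul] at *
    have hc : 0 ≤ L.v c.val := L.mem_O.1 c.2
    have : L.v ((c * x : L.O) : E) = L.v c.val + L.v x.val := L.hvmul _ _
    rw [this]
    calc (1 : WithTop ℤ) = 0 + 1 := by rw [zero_add]
      _ ≤ L.v c.val + L.v x.val := add_le_add hc hx

lemma mem_I {x : L.O} : x ∈ L.I ↔ (1 : WithTop ℤ) ≤ L.v x.val := Iff.rfl

lemma v_eq_zero_of {x : E} (h0 : 0 ≤ L.v x) (h1 : ¬ (1 : WithTop ℤ) ≤ L.v x) : L.v x = 0 := by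
  rcases eq_or_ne x 0 with rfl | hx
  · exact absurd (L.v0 ▸ le_top) h1
  obtain ⟨k, hk⟩ := L.ex_int hx
  rw [hk] at h0 h1 ⊢
  have e0 : (0:ℤ) ≤ k := by exact_mod_cast h0
  have e1 : ¬ (1:ℤ) ≤ k := fun h => h1 (by exact_mod_cast h)
  have : k = 0 := by omega
  rw [this]; rfl

lemma Imax : L.I.IsMaximal := by
  rw [Ideal.isMaximal_iff]
  constructor
  · rw [mem_I]
    intro h
    have : L.v ((1 : L.O) : E) = 0 := L.v1
    rw [this] at h
    exact absurd h (by norm_num)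
  · intro J x _ hxI hxJ
    have h0 : 0 ≤ L.v x.val := L.mem_O.1 x.2
    have hv : L.v x.val = 0 := L.v_eq_zero_of h0 (by rwa [mem_I] at hxI)
    set xinv : L.O := ⟨(x.val)⁻¹, L.unit_inv_mem hv⟩ with hxi
    have h1 : xinv * x = 1 := by
      apply Subtype.ext
      have : (xinv * x : L.O).val = (x.val)⁻¹ * x.val := rfl
      rw [this, inv_mul_cancel₀ (L.unit_ne_zero hv)]
      rfl
    rw [← h1]
    exact J.mul_mem_left xinv hxJ

/-- σ as ring endomorphism of O -/
def σO : L.O →+* L.O where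
  toFun x := ⟨L.σ x.val, L.hσO _ x.2⟩
  map_one' := by apply Subtype.ext; simp
  map_mul' x y := by apply Subtype.ext; simp
  map_zero' := by apply Subtype.ext; simp
  map_add' x y := by apply Subtype.ext; simp

lemma σO_val (x : L.O) : (L.σO x).val = L.σ x.val := rfl

/-- residue-level trace and norm surjectivity, expressed at the level of O. -/
lemma residue_tools :
    (∀ c ∈ L.O, L.σ c = c → ∃ t ∈ L.O, (1:WithTop ℤ) ≤ L.v (t + L.σ t - c)) ∧
    (∀ u ∈ L.O, L.v u = 0 → L.σ u = u → ∃ w ∈ L.O, L.v w = 0 ∧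
      (1:WithTop ℤ) ≤ L.v (w * L.σ w - u)) := by
  classical
  haveI hmax : L.I.IsMaximal := L.Imax
  set mk := Ideal.Quotient.mk L.I with hmk
  -- finiteness
  haveI hfin : Finite (L.O ⧸ L.I) := by
    obtain ⟨S, hS⟩ := L.hfinres
    refine Finite.of_surjective
      (fun y : {y : E // y ∈ S} => if h : y.val ∈ L.O then mk ⟨y.val, h⟩ else 0) ?_
    intro r
    obtain ⟨x, rfl⟩ := Ideal.Quotient.mk_surjective r
    obtain ⟨y, hyS, hy⟩ := hS x.val x.2
    have hyO : y ∈ L.O := by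
      have h1 : x.val - y ∈ L.O := L.mem_O.2 (le_trans (by norm_num) hy)
      have := L.O.sub_mem x.2 h1
      simpa using this
    refine ⟨⟨y, hyS⟩, ?_⟩
    simp only [hyO, dif_pos]
    have : (⟨y, hyO⟩ : L.O) - x ∈ L.I := by
      rw [mem_I]
      have : ((⟨y, hyO⟩ - x : L.O) : E) = y - x.val := rfl
      rw [this, L.v_sub_comm]
      exact hy
    exact (Ideal.Quotient.eq (I := L.I)).2 this
  -- induced involution
  have hker : ∀ a ∈ L.I, (mk.comp L.σO) a = 0 := by
    intro a ha
    rw [RingHom.comp_apply]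
    rw [hmk]
    rw [Ideal.Quotient.eq_zero_iff_mem, mem_I, σO_val, L.vσ]
    exact (L.mem_I.1 ha)
  set τ := Ideal.Quotient.lift L.I (mk.comp L.σO) hker with hτdef
  have hτmk : ∀ x : L.O, τ (mk x) = mk (L.σO x) := fun x =>
    Ideal.Quotient.lift_mk L.I _ _
  have hττ : ∀ r : L.O ⧸ L.I, τ (τ r) = r := by
    intro r
    obtain ⟨x, rfl⟩ := Ideal.Quotient.mk_surjective r
    rw [show (Ideal.Quotient.mk L.I) x = mk x from rfl, hτmk, hτmk]
    congr 1
    apply Subtype.ext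
    rw [σO_val, σO_val, L.hσinv]
  have hτne : τ ≠ RingHom.id (L.O ⧸ L.I) := by
    obtain ⟨x, hxO, hxv⟩ := L.hσres
    have hv0' : L.v (L.σ x - x) = 0 := by
      have hmem : L.σ x - x ∈ L.O := L.O.sub_mem (L.hσO x hxO) hxO
      exact le_antisymm hxv (L.mem_O.1 hmem)
    intro h
    have : τ (mk ⟨x, hxO⟩) = mk ⟨x, hxO⟩ := by rw [h]; rfl
    rw [hτmk] at this
    have h2 : L.σO ⟨x, hxO⟩ - ⟨x, hxO⟩ ∈ L.I := (Ideal.Quotient.eq (I := L.I)).1 this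
    rw [mem_I] at h2
    have h3 : ((L.σO ⟨x, hxO⟩ - ⟨x, hxO⟩ : L.O) : E) = L.σ x - x := rfl
    rw [h3, hv0'] at h2
    exact absurd h2 (by norm_num)
  letI : Field (L.O ⧸ L.I) := Ideal.Quotient.field L.I
  constructor
  · -- trace lift
    intro c hcO hcfix
    have hfix : τ (mk ⟨c, hcO⟩) = mk ⟨c, hcO⟩ := by
      rw [hτmk]
      congr 1
      exact Subtype.ext hcfix
    obtain ⟨z, hz⟩ := field_trace_surj τ hττ hτne (mk ⟨c, hcO⟩) hfix
    obtain ⟨t0, rfl⟩ := Ideal.Quotient.mk_surjective z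
    refine ⟨t0.val, t0.2, ?_⟩
    have hmem : t0 + L.σO t0 - ⟨c, hcO⟩ ∈ L.I := by
      rw [← Ideal.Quotient.eq_zero_iff_mem]
      have : (Ideal.Quotient.mk L.I) (t0 + L.σO t0 - ⟨c, hcO⟩)
          = mk t0 + τ (mk t0) - mk ⟨c, hcO⟩ := by
        rw [hτmk, ← hmk, mk.map_sub, mk.map_add]
      rw [this, hz]
      ring
    rw [mem_I] at hmem
    have : ((t0 + L.σO t0 - ⟨c, hcO⟩ : L.O) : E) = t0.val + L.σ t0.val - c := rfl
    rwa [this] at hmem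
  · -- norm lift
    intro u huO huv hufix
    have hfix : τ (mk ⟨u, huO⟩) = mk ⟨u, huO⟩ := by
      rw [hτmk]; congr 1; exact Subtype.ext hufix
    have hne : mk ⟨u, huO⟩ ≠ 0 := by
      rw [hmk, Ne, Ideal.Quotient.eq_zero_iff_mem, mem_I]
      intro h
      rw [show ((⟨u, huO⟩ : L.O) : E) = u from rfl, huv] at h
      exact absurd h (by norm_num)
    obtain ⟨z, hz⟩ := finite_field_norm_surj τ hττ hτne (mk ⟨u, huO⟩) hne hfix
    obtain ⟨w0, rfl⟩ := Ideal.Quotient.mk_surjective z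
    have hw0v : L.v w0.val = 0 := by
      apply L.v_eq_zero_of (L.mem_O.1 w0.2)
      intro h
      have : mk w0 = 0 := by
        rw [hmk, Ideal.Quotient.eq_zero_iff_mem, mem_I]; exact h
      rw [show (Ideal.Quotient.mk L.I) w0 = mk w0 from rfl, this] at hz
      rw [zero_mul] at hz
      exact hne hz.symm
    refine ⟨w0.val, w0.2, hw0v, ?_⟩
    have hmem : w0 * L.σO w0 - ⟨u, huO⟩ ∈ L.I := by
      rw [← Ideal.Quotient.eq_zero_iff_mem]
      have : (Ideal.Quotient.mk L.I) (w0 * L.σO w0 - ⟨u, huO⟩)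
          = mk w0 * τ (mk w0) - mk ⟨u, huO⟩ := by
        rw [hτmk, ← hmk, mk.map_sub, mk.map_mul]
      rw [this, hz]
      ring
    rw [mem_I] at hmem
    have : ((w0 * L.σO w0 - ⟨u, huO⟩ : L.O) : E) = w0.val * L.σ w0.val - u := rfl
    rwa [this] at hmem


lemma le_v_mul {a b : ℤ} {x y : E} (hx : (a : WithTop ℤ) ≤ L.v x)
    (hy : (b : WithTop ℤ) ≤ L.v y) : ((a + b : ℤ) : WithTop ℤ) ≤ L.v (x * y) := by
  rw [L.hvmul]
  push_cast
  exact add_le_add hx hy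

lemma top_of_all_le {a : WithTop ℤ} (h : ∀ N : ℤ, (N : WithTop ℤ) ≤ a) : a = ⊤ := by
  by_contra ha
  obtain ⟨k, hk⟩ := WithTop.ne_top_iff_exists.1 ha
  have h2 := h (k + 1)
  rw [← hk] at h2
  have h3 : (k + 1 : ℤ) ≤ k := by exact_mod_cast h2
  omega

/-- Main norm surjectivity lemma: every σ-fixed unit is a norm. -/
lemma norm_surj (u : E) (huv : L.v u = 0) (hufix : L.σ u = u) :
    ∃ w : E, L.v w = 0 ∧ w * L.σ w = u := by
  classical
  obtain ⟨htr, hnr⟩ := L.residue_tools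
  obtain ⟨w₀, hw₀O, hw₀v, hw₀⟩ := hnr u (L.unit_mem huv) huv hufix
  set Q : ℕ → E → Prop := fun k w => L.v w = 0 ∧
    ((((k : ℤ) + 1 : ℤ)) : WithTop ℤ) ≤ L.v (w * L.σ w - u) with hQ
  have hQ0 : Q 0 w₀ := by
    refine ⟨hw₀v, ?_⟩
    norm_num
    exact hw₀
  have step : ∀ (k : ℕ) (w : E), Q k w → ∃ w', Q (k+1) w' ∧
      ((((k : ℤ) + 1 : ℤ)) : WithTop ℤ) ≤ L.v (w' - w) := by
    intro k w hw
    obtain ⟨hwv, hwd⟩ := hw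
    set K := k + 1 with hK
    have hKz : ((K : ℕ) : ℤ) = (k : ℤ) + 1 := by rw [hK]; push_cast; ring
    have hsv : L.v (w * L.σ w) = 0 := by rw [L.hvmul, hwv, L.vσ, hwv]; rfl
    have hsne : w * L.σ w ≠ 0 := L.unit_ne_zero hsv
    have hπK : L.pi ^ K ≠ 0 := pow_ne_zero _ L.pi_ne_zero
    have hvπK : L.v (L.pi ^ K) = ((K : ℤ) : WithTop ℤ) := L.v_pow K
    set c : E := (u - w * L.σ w) * (L.pi ^ K)⁻¹ * (w * L.σ w)⁻¹ with hc
    have hvus : (((K : ℕ) : ℤ) : WithTop ℤ) ≤ L.v (u - w * L.σ w) := by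
      rw [L.v_sub_comm, hKz]
      exact hwd
    have hvc : 0 ≤ L.v c := by
      have h1 : (((K:ℤ) + (-(K:ℤ)) : ℤ) : WithTop ℤ) ≤ L.v ((u - w * L.σ w) * (L.pi ^ K)⁻¹) :=
        L.le_v_mul hvus (by rw [L.vinv hπK, hvπK]; rfl)
      have h2 : (((K:ℤ) + (-(K:ℤ)) + 0 : ℤ) : WithTop ℤ) ≤ L.v c := by
        rw [hc]
        exact L.le_v_mul h1 (by rw [L.vinv hsne, hsv]; rfl)
      simpa using h2
    have hcO : c ∈ L.O := L.mem_O.2 hvc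
    have hcfix : L.σ c = c := by
      rw [hc, map_mul, map_mul, map_inv₀, map_inv₀, map_sub, map_pow, hσπ, hufix, map_mul,
        L.hσinv]
      ring_nf
    have hc_eq : u - w * L.σ w = L.pi ^ K * c * (w * L.σ w) := by
      rw [hc]
      have hw0 : w ≠ 0 := L.unit_ne_zero hwv
      have hσw0 : L.σ w ≠ 0 := L.σ_ne_zero hw0
      field_simp
    obtain ⟨t, htO, ht⟩ := htr c hcO hcfix
    have hvt : 0 ≤ L.v t := L.mem_O.1 htO
    refine ⟨w * (1 + L.pi ^ K * t), ⟨?_, ?_⟩, ?_⟩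
    · -- valuation of w' is zero
      have hvpt : (0 : WithTop ℤ) < L.v (L.pi ^ K * t) := by
        have : ((((K:ℕ):ℤ) + 0 : ℤ) : WithTop ℤ) ≤ L.v (L.pi ^ K * t) :=
          L.le_v_mul (le_of_eq hvπK.symm) hvt
        refine lt_of_lt_of_le ?_ this
        exact_mod_cast (by omega : (0:ℤ) < (K:ℤ) + 0)
      have h1 : L.v (1 + L.pi ^ K * t) = 0 := by
        rw [L.v_add_eq_left (by rw [L.v1]; exact hvpt), L.v1]
      rw [L.hvmul, hwv, h1]; rfl
    · -- improved approximation
      have hσw' : L.σ (w * (1 + L.pi ^ K * t)) = L.σ w * (1 + L.pi ^ K * L.σ t) := by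
        rw [map_mul, map_add, map_one, map_mul, map_pow, hσπ]
      have key : (w * (1 + L.pi ^ K * t)) * L.σ (w * (1 + L.pi ^ K * t)) - u =
          - (L.pi ^ K * (w * L.σ w) * ((c - (t + L.σ t)) - L.pi ^ K * (t * L.σ t))) := by
        rw [hσw']
        linear_combination (-1 : E) * hc_eq
      rw [key, L.vneg]
      have hbr : ((1 : ℤ) : WithTop ℤ) ≤ L.v ((c - (t + L.σ t)) - L.pi ^ K * (t * L.σ t)) := by
        have hrw : (c - (t + L.σ t)) - L.pi ^ K * (t * L.σ t)
            = (c - (t + L.σ t)) + (-(L.pi ^ K * (t * L.σ t))) := by ring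
        rw [hrw]
        refine le_trans (le_min ?_ ?_) (L.hvadd _ _)
        · have : c - (t + L.σ t) = -(t + L.σ t - c) := by ring
          rw [this, L.vneg]
          exact_mod_cast ht
        · rw [L.vneg]
          have h2 : ((((K:ℕ):ℤ) + 0 : ℤ) : WithTop ℤ) ≤ L.v (L.pi ^ K * (t * L.σ t)) :=
            L.le_v_mul (le_of_eq hvπK.symm) (by
              have : ((0 + 0 : ℤ) : WithTop ℤ) ≤ L.v (t * L.σ t) :=
                L.le_v_mul hvt (by rw [L.vσ]; exact hvt)
              simpa using this)
          refine le_trans ?_ h2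
          exact_mod_cast (by omega : (1:ℤ) ≤ (K:ℤ) + 0)
      have h3 : ((((K:ℤ)) + 0 + 1 : ℤ) : WithTop ℤ) ≤
          L.v (L.pi ^ K * (w * L.σ w) * ((c - (t + L.σ t)) - L.pi ^ K * (t * L.σ t))) :=
        L.le_v_mul (L.le_v_mul (le_of_eq hvπK.symm) (le_of_eq hsv.symm)) hbr
      refine le_trans ?_ h3
      exact_mod_cast (by push_cast [hK]; ring_nf; omega : ((k:ℤ) + 1 + 1 : ℤ) ≤ (K:ℤ) + 0 + 1)
    · -- closeness
      have : w * (1 + L.pi ^ K * t) - w = w * (L.pi ^ K * t) := by ring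
      rw [this]
      have h2 : ((0 + ((K:ℤ) + 0) : ℤ) : WithTop ℤ) ≤ L.v (w * (L.pi ^ K * t)) :=
        L.le_v_mul (le_of_eq hwv.symm) (L.le_v_mul (le_of_eq hvπK.symm) hvt)
      refine le_trans ?_ h2
      exact_mod_cast (by push_cast [hK]; omega : ((k:ℤ) + 1 : ℤ) ≤ 0 + ((K:ℤ) + 0))
  choose W hW1 hW2 using step
  let f : ∀ _ : ℕ, {w : E // Q _ w} := fun k =>
    Nat.rec (motive := fun k => {w : E // Q k w}) ⟨w₀, hQ0⟩
      (fun k prev => ⟨W k prev.1 prev.2, hW1 k prev.1 prev.2⟩) k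
  have hf0 : ∀ k : ℕ, Q k (f k).1 := fun k => (f k).2
  have hfs : ∀ k : ℕ, ((((k:ℤ) + 1 : ℤ)) : WithTop ℤ) ≤ L.v ((f (k+1)).1 - (f k).1) :=
    fun k => hW2 k (f k).1 (f k).2
  have hchain : ∀ a b : ℕ, a ≤ b →
      ((((a:ℤ) + 1 : ℤ)) : WithTop ℤ) ≤ L.v ((f b).1 - (f a).1) := by
    intro a b hab
    induction b with
    | zero =>
      have : a = 0 := Nat.le_zero.1 hab
      subst this
      rw [sub_self, L.v0]
      exact le_top
    | succ m ih =>
      rcases Nat.eq_or_lt_of_le hab with rfl | hlt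
      · rw [sub_self, L.v0]; exact le_top
      · have ham : a ≤ m := Nat.lt_succ_iff.1 hlt
        have hsplit : (f (m+1)).1 - (f a).1 =
            ((f (m+1)).1 - (f m).1) + ((f m).1 - (f a).1) := by ring
        rw [hsplit]
        refine le_trans (le_min ?_ (ih ham)) (L.hvadd _ _)
        refine le_trans ?_ (hfs m)
        exact_mod_cast (by omega : ((a:ℤ) + 1 : ℤ) ≤ (m:ℤ) + 1)
  have hcauchy : ∀ N : ℤ, ∃ M : ℕ, ∀ m₁ m₂ : ℕ, M ≤ m₁ → M ≤ m₂ →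
      (N : WithTop ℤ) ≤ L.v ((f m₁).1 - (f m₂).1) := by
    intro N
    refine ⟨N.toNat, fun m₁ m₂ h1 h2 => ?_⟩
    have hNle : ∀ m : ℕ, N.toNat ≤ m → (N : WithTop ℤ) ≤ (((m:ℤ) + 1 : ℤ) : WithTop ℤ) := by
      intro m hm
      have : N ≤ (m : ℤ) + 1 := by
        have := Int.self_le_toNat N
        omega
      exact_mod_cast this
    rcases le_total m₁ m₂ with h | h
    · rw [L.v_sub_comm]
      exact le_trans (hNle m₁ h1) (hchain m₁ m₂ h)
    · exact le_trans (hNle m₂ h2) (hchain m₂ m₁ h)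
  obtain ⟨L₀, hL₀⟩ := L.hcomplete (fun k => (f k).1) hcauchy
  have hvL₀ : L.v L₀ = 0 := by
    obtain ⟨M, hM⟩ := hL₀ 1
    have h1 : ((1:ℤ) : WithTop ℤ) ≤ L.v ((f M).1 - L₀) := hM M le_rfl
    have h2 : L₀ = (f M).1 + (L₀ - (f M).1) := by ring
    rw [h2, L.v_add_eq_left, (hf0 M).1]
    rw [(hf0 M).1, L.v_sub_comm]
    refine lt_of_lt_of_le ?_ h1
    exact_mod_cast (by omega : (0:ℤ) < 1)
  refine ⟨L₀, hvL₀, ?_⟩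
  have hall : ∀ N : ℤ, (N : WithTop ℤ) ≤ L.v (L₀ * L.σ L₀ - u) := by
    intro N
    obtain ⟨M, hM⟩ := hL₀ N
    set m := max M N.toNat with hm
    have h1 : (N : WithTop ℤ) ≤ L.v ((f m).1 - L₀) := hM m (le_max_left _ _)
    have h1' : (N : WithTop ℤ) ≤ L.v (L₀ - (f m).1) := by rw [L.v_sub_comm]; exact h1
    have h2 : (N : WithTop ℤ) ≤ L.v ((f m).1 * L.σ (f m).1 - u) := by
      refine le_trans ?_ (hf0 m).2
      have hmN : N.toNat ≤ m := le_max_right _ _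
      have : N ≤ (m:ℤ) + 1 := by
        have := Int.self_le_toNat N
        omega
      exact_mod_cast this
    have hsplit : L₀ * L.σ L₀ - u =
        L₀ * (L.σ L₀ - L.σ (f m).1) + L.σ (f m).1 * (L₀ - (f m).1)
          + ((f m).1 * L.σ (f m).1 - u) := by ring
    have ha : (N : WithTop ℤ) ≤ L.v (L₀ * (L.σ L₀ - L.σ (f m).1)) := by
      have hσdiff : L.v (L.σ L₀ - L.σ (f m).1) = L.v (L₀ - (f m).1) := by
        rw [← map_sub, L.vσ]
      have hc1 : (N : WithTop ℤ) ≤ L.v (L.σ L₀ - L.σ (f m).1) := by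
        rw [hσdiff]; exact h1'
      have := L.le_v_mul (a := 0) (b := N) (le_of_eq hvL₀.symm) hc1
      simpa using this
    have hb : (N : WithTop ℤ) ≤ L.v (L.σ (f m).1 * (L₀ - (f m).1)) := by
      have hvfm : L.v (L.σ (f m).1) = 0 := by rw [L.vσ]; exact (hf0 m).1
      have := L.le_v_mul (a := 0) (b := N) (le_of_eq hvfm.symm) h1'
      simpa using this
    rw [hsplit]
    exact le_trans (le_min (le_trans (le_min ha hb) (L.hvadd _ _)) h2) (L.hvadd _ _)
  have htop := top_of_all_le hall
  have h0 : L₀ * L.σ L₀ - u = 0 := (L.hv0 _).1 htop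
  exact sub_eq_zero.1 h0


lemma res_unit : ∃ x : E, x ∈ L.O ∧ L.v x = 0 ∧ L.v (L.σ x - x) = 0 := by
  obtain ⟨x, hxO, hxv⟩ := L.hσres
  have hmem : L.σ x - x ∈ L.O := L.O.sub_mem (L.hσO x hxO) hxO
  have hd : L.v (L.σ x - x) = 0 := le_antisymm hxv (L.mem_O.1 hmem)
  refine ⟨x, hxO, ?_, hd⟩
  by_contra hx
  have h0 : 0 ≤ L.v x := L.mem_O.1 hxO
  have hpos : 0 < L.v x := lt_of_le_of_ne h0 (Ne.symm hx)
  have hσpos : 0 < L.v (L.σ x) := by rw [L.vσ]; exact hpos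
  have : (0 : WithTop ℤ) < L.v (L.σ x - x) := by
    have hrw : L.σ x - x = L.σ x + (-x) := by ring
    rw [hrw]
    exact lt_of_lt_of_le (lt_min hσpos (by rwa [L.vneg])) (L.hvadd _ _)
  rw [hd] at this
  exact lt_irrefl _ this

/-- Trace pivot: for any nonzero b there is a unit c with v(cb + σ(cb̄)) = v b. -/
lemma trace_pivot (b : E) (hb : b ≠ 0) :
    ∃ c, c ∈ L.O ∧ L.v c = 0 ∧ L.v (c * b + L.σ c * L.σ b) = L.v b := by
  rcases eq_or_lt_of_le (show L.v b ≤ L.v (b + L.σ b) by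
      refine le_trans (le_min le_rfl (by rw [L.vσ])) (L.hvadd _ _)) with heq | hlt
  · refine ⟨1, L.O.one_mem, L.v1, ?_⟩
    rw [map_one, one_mul, one_mul]
    exact heq.symm
  · obtain ⟨x, hxO, hxv, hxd⟩ := L.res_unit
    refine ⟨x, hxO, hxv, ?_⟩
    have hrw : x * b + L.σ x * L.σ b = (L.σ x - x) * L.σ b + x * (b + L.σ b) := by ring
    rw [hrw, L.v_add_eq_left]
    · rw [L.hvmul, hxd, L.vσ, zero_add]
    · rw [L.hvmul, hxd, L.vσ, zero_add, L.hvmul, hxv, zero_add]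
      exact hlt

section Matrices

variable {n : ℕ}

/-- entries in O -/
def MO {m k : ℕ} (U : Matrix (Fin m) (Fin k) E) : Prop := ∀ i j, U i j ∈ L.O

/-- unimodular over O -/
def IsUni (U : Matrix (Fin n) (Fin n) E) : Prop :=
  L.MO U ∧ ∃ V, L.MO V ∧ U * V = 1 ∧ V * U = 1

/-- conjugate transpose -/
def adj (U : Matrix (Fin n) (Fin n) E) : Matrix (Fin n) (Fin n) E :=
  (U.map L.σ).transpose

lemma adj_apply (U : Matrix (Fin n) (Fin n) E) (i j : Fin n) :
    L.adj U i j = L.σ (U j i) := rfl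

/-- congruence -/
def conj (U A : Matrix (Fin n) (Fin n) E) : Matrix (Fin n) (Fin n) E :=
  U * A * L.adj U

lemma adj_mul (U W : Matrix (Fin n) (Fin n) E) : L.adj (U * W) = L.adj W * L.adj U := by
  unfold adj
  rw [Matrix.map_mul, Matrix.transpose_mul]

lemma adj_one : L.adj (1 : Matrix (Fin n) (Fin n) E) = 1 := by
  unfold adj
  rw [Matrix.map_one _ (map_zero L.σ) (map_one L.σ), Matrix.transpose_one]

lemma adj_adj (U : Matrix (Fin n) (Fin n) E) : L.adj (L.adj U) = U := by
  ext i j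
  rw [adj_apply, adj_apply, L.hσinv]

lemma conj_conj (U W A : Matrix (Fin n) (Fin n) E) :
    L.conj U (L.conj W A) = L.conj (U * W) A := by
  unfold conj
  rw [L.adj_mul]
  noncomm_ring

lemma conj_one (A : Matrix (Fin n) (Fin n) E) : L.conj 1 A = A := by
  unfold conj
  rw [L.adj_one, one_mul, mul_one]

lemma adj_conj {U A : Matrix (Fin n) (Fin n) E} (hA : L.adj A = A) :
    L.adj (L.conj U A) = L.conj U A := by
  unfold conj
  rw [L.adj_mul, L.adj_mul, L.adj_adj, hA, Matrix.mul_assoc]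

lemma MO_one : L.MO (1 : Matrix (Fin n) (Fin n) E) := by
  intro i j
  rw [Matrix.one_apply]
  split <;> simp [Subring.one_mem, Subring.zero_mem]

lemma MO_mul {U W : Matrix (Fin n) (Fin n) E} (hU : L.MO U) (hW : L.MO W) : L.MO (U * W) := by
  intro i j
  rw [Matrix.mul_apply]
  exact Subring.sum_mem _ (fun k _ => L.O.mul_mem (hU i k) (hW k j))

lemma MO_adj {U : Matrix (Fin n) (Fin n) E} (hU : L.MO U) : L.MO (L.adj U) := by
  intro i j
  rw [adj_apply]
  exact L.hσO _ (hU j i)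

lemma uni_mul {U W : Matrix (Fin n) (Fin n) E} (hU : L.IsUni U) (hW : L.IsUni W) :
    L.IsUni (U * W) := by
  obtain ⟨hUO, V₁, hV₁O, hUV₁, hV₁U⟩ := hU
  obtain ⟨hWO, V₂, hV₂O, hWV₂, hV₂W⟩ := hW
  refine ⟨L.MO_mul hUO hWO, V₂ * V₁, L.MO_mul hV₂O hV₁O, ?_, ?_⟩
  · calc U * W * (V₂ * V₁) = U * (W * V₂) * V₁ := by noncomm_ring
      _ = 1 := by rw [hWV₂, mul_one, hUV₁]
  · calc V₂ * V₁ * (U * W) = V₂ * (V₁ * U) * W := by noncomm_ring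
      _ = 1 := by rw [hV₁U, mul_one, hV₂W]

lemma uni_one : L.IsUni (1 : Matrix (Fin n) (Fin n) E) :=
  ⟨L.MO_one, 1, L.MO_one, by rw [mul_one], by rw [mul_one]⟩

lemma uni_det_ne_zero {U : Matrix (Fin n) (Fin n) E} (hU : L.IsUni U) : U.det ≠ 0 := by
  obtain ⟨_, V, _, hUV, _⟩ := hU
  intro h
  have := congrArg Matrix.det hUV
  rw [Matrix.det_mul, h, zero_mul, Matrix.det_one] at this
  exact zero_ne_one this

lemma conj_det_ne_zero {U A : Matrix (Fin n) (Fin n) E} (hU : L.IsUni U) (hA : A.det ≠ 0) :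
    (L.conj U A).det ≠ 0 := by
  obtain ⟨hUO, V, hVO, hUV, hVU⟩ := hU
  have hadj : (L.adj U).det ≠ 0 := by
    intro h
    have h2 : L.adj V * L.adj U = 1 := by rw [← L.adj_mul, hUV, L.adj_one]
    have := congrArg Matrix.det h2
    rw [Matrix.det_mul, h, mul_zero, Matrix.det_one] at this
    exact zero_ne_one this
  unfold conj
  rw [Matrix.det_mul, Matrix.det_mul]
  exact mul_ne_zero (mul_ne_zero (L.uni_det_ne_zero ⟨hUO, V, hVO, hUV, hVU⟩) hA) hadj

/-- column-supported matrix -/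
def colM (j₀ : Fin n) (g : Fin n → E) : Matrix (Fin n) (Fin n) E :=
  Matrix.of fun i j => if j = j₀ then g i else 0

/-- row-supported matrix -/
def rowM (i₀ : Fin n) (h : Fin n → E) : Matrix (Fin n) (Fin n) E :=
  Matrix.of fun i j => if i = i₀ then h j else 0

lemma colM_mul (j₀ : Fin n) (g : Fin n → E) (A : Matrix (Fin n) (Fin n) E) (i j : Fin n) :
    ((colM j₀ g) * A) i j = g i * A j₀ j := by
  rw [Matrix.mul_apply]
  rw [Finset.sum_eq_single j₀]
  · simp [colM]
  · intro b _ hb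
    simp [colM, hb]
  · intro h
    exact absurd (Finset.mem_univ j₀) h

lemma mul_rowM (i₀ : Fin n) (h : Fin n → E) (A : Matrix (Fin n) (Fin n) E) (i j : Fin n) :
    (A * (rowM i₀ h)) i j = A i i₀ * h j := by
  rw [Matrix.mul_apply]
  rw [Finset.sum_eq_single i₀]
  · simp [rowM]
  · intro b _ hb
    simp [rowM, hb]
  · intro hh
    exact absurd (Finset.mem_univ i₀) hh

lemma adj_colM (j₀ : Fin n) (g : Fin n → E) :
    L.adj (colM j₀ g) = rowM j₀ (fun i => L.σ (g i)) := by
  ext i j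
  rw [adj_apply]
  by_cases h : i = j₀ <;> simp [colM, rowM, h]

lemma colM_sq (j₀ : Fin n) (g : Fin n → E) (hg : g j₀ = 0) :
    (colM j₀ g : Matrix (Fin n) (Fin n) E) * colM j₀ g = 0 := by
  ext i j
  rw [colM_mul]
  by_cases h : j = j₀ <;> simp [colM, h, hg]

lemma MO_colM (j₀ : Fin n) (g : Fin n → E) (hg : ∀ i, g i ∈ L.O) : L.MO (colM j₀ g) := by
  intro i j
  by_cases h : j = j₀ <;> simp [colM, h, hg i, Subring.zero_mem]

lemma uni_one_add_colM (j₀ : Fin n) (g : Fin n → E) (hg0 : g j₀ = 0)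
    (hg : ∀ i, g i ∈ L.O) : L.IsUni (1 + colM j₀ g) := by
  have hMO : L.MO (1 + colM j₀ g) := by
    intro i j
    exact L.O.add_mem (L.MO_one i j) (L.MO_colM j₀ g hg i j)
  have hMO' : L.MO (1 - colM j₀ g) := by
    intro i j
    exact L.O.sub_mem (L.MO_one i j) (L.MO_colM j₀ g hg i j)
  have hsq := colM_sq j₀ g hg0
  refine ⟨hMO, 1 - colM j₀ g, hMO', ?_, ?_⟩
  · have : (1 + colM j₀ g) * (1 - colM j₀ g) = 1 - colM j₀ g * colM j₀ g := by noncomm_ring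
    rw [this, hsq, sub_zero]
  · have : (1 - colM j₀ g) * (1 + colM j₀ g) = 1 - colM j₀ g * colM j₀ g := by noncomm_ring
    rw [this, hsq, sub_zero]

lemma conj_one_add_colM (j₀ : Fin n) (g : Fin n → E) (A : Matrix (Fin n) (Fin n) E)
    (i j : Fin n) :
    L.conj (1 + colM j₀ g) A i j
      = A i j + g i * A j₀ j + A i j₀ * L.σ (g j) + g i * A j₀ j₀ * L.σ (g j) := by
  unfold conj
  have hadj : L.adj (1 + colM j₀ g) = 1 + rowM j₀ (fun i => L.σ (g i)) := by
    have : L.adj (1 + colM j₀ g) = L.adj 1 + L.adj (colM j₀ g) := by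
      unfold adj
      rw [Matrix.map_add _ (fun a₁ a₂ => map_add L.σ a₁ a₂), Matrix.transpose_add]
    rw [this, L.adj_one, L.adj_colM]
  rw [hadj]
  have expand : (1 + colM j₀ g) * A * (1 + rowM j₀ (fun i => L.σ (g i)))
      = A + colM j₀ g * A + A * rowM j₀ (fun i => L.σ (g i))
        + colM j₀ g * (A * rowM j₀ (fun i => L.σ (g i))) := by
    noncomm_ring
  rw [expand]
  rw [Matrix.add_apply, Matrix.add_apply, Matrix.add_apply, colM_mul, mul_rowM, colM_mul,
    mul_rowM]
  ring

end Matrices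


section Matrices2

variable {n : ℕ}

lemma mul3_apply (U A W : Matrix (Fin n) (Fin n) E) (i j : Fin n) :
    (U * A * W) i j = ∑ k, ∑ l, U i k * A k l * W l j := by
  rw [Matrix.mul_apply]
  simp_rw [Matrix.mul_apply, Finset.sum_mul]
  exact Finset.sum_comm

lemma v_conj_ge {μ : WithTop ℤ} {A T S : Matrix (Fin n) (Fin n) E}
    (hA : ∀ i j, μ ≤ L.v (A i j)) (hT : L.MO T) (hS : L.MO S) (i j : Fin n) :
    μ ≤ L.v ((T * A * S) i j) := by
  rw [mul3_apply]
  refine L.v_sum_ge _ _ _ (fun k _ => L.v_sum_ge _ _ _ (fun l _ => ?_))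
  rw [L.hvmul, L.hvmul]
  calc μ = 0 + μ + 0 := by rw [zero_add, add_zero]
    _ ≤ L.v (T i k) + L.v (A k l) + L.v (S l j) :=
      add_le_add (add_le_add (L.mem_O.1 (hT i k)) (hA k l)) (L.mem_O.1 (hS l j))

/-- permutation matrix -/
def pmat (e : Equiv.Perm (Fin n)) : Matrix (Fin n) (Fin n) E :=
  Matrix.of fun i j => if j = e i then 1 else 0

lemma MO_pmat (e : Equiv.Perm (Fin n)) : L.MO (pmat e) := by
  intro i j
  by_cases h : j = e i <;> simp [pmat, h, Subring.one_mem, Subring.zero_mem]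

lemma pmat_mul_apply (e : Equiv.Perm (Fin n)) (A : Matrix (Fin n) (Fin n) E) (i j : Fin n) :
    ((pmat e : Matrix (Fin n) (Fin n) E) * A) i j = A (e i) j := by
  rw [Matrix.mul_apply, Finset.sum_eq_single (e i)]
  · simp [pmat]
  · intro b _ hb
    simp [pmat, hb]
  · intro hh
    exact absurd (Finset.mem_univ _) hh

lemma adj_pmat (e : Equiv.Perm (Fin n)) : L.adj (pmat e) = pmat e.symm := by
  ext i j
  rw [adj_apply]
  show L.σ (if i = e j then 1 else 0) = (if j = e.symm i then (1:E) else 0)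
  by_cases h : i = e j
  · have h2 : j = e.symm i := by rw [h, Equiv.symm_apply_apply]
    rw [if_pos h, if_pos h2, map_one]
  · have h2 : ¬ j = e.symm i := fun hc => h (by rw [hc, Equiv.apply_symm_apply])
    rw [if_neg h, if_neg h2, map_zero]

lemma mul_pmat_apply (f : Equiv.Perm (Fin n)) (A : Matrix (Fin n) (Fin n) E) (i j : Fin n) :
    (A * (pmat f : Matrix (Fin n) (Fin n) E)) i j = A i (f.symm j) := by
  rw [Matrix.mul_apply, Finset.sum_eq_single (f.symm j)]
  · show A i (f.symm j) * (if j = f (f.symm j) then 1 else 0) = _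
    rw [Equiv.apply_symm_apply, if_pos rfl, mul_one]
  · intro b _ hb
    show A i b * (if j = f b then 1 else 0) = 0
    rw [if_neg (fun hc => hb (by rw [hc, Equiv.symm_apply_apply])), mul_zero]
  · intro hh
    exact absurd (Finset.mem_univ _) hh

lemma uni_pmat (e : Equiv.Perm (Fin n)) : L.IsUni (pmat e) := by
  have h1 : (pmat e : Matrix (Fin n) (Fin n) E) * pmat e.symm = 1 := by
    ext i j
    rw [pmat_mul_apply]
    show (if j = e.symm (e i) then (1:E) else 0) = _
    rw [Equiv.symm_apply_apply, Matrix.one_apply]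
    by_cases h : i = j
    · rw [if_pos h.symm, if_pos h]
    · rw [if_neg (Ne.symm h), if_neg h]
  have h2 : (pmat e.symm : Matrix (Fin n) (Fin n) E) * pmat e = 1 := by
    ext i j
    rw [pmat_mul_apply]
    show (if j = e (e.symm i) then (1:E) else 0) = _
    rw [Equiv.apply_symm_apply, Matrix.one_apply]
    by_cases h : i = j
    · rw [if_pos h.symm, if_pos h]
    · rw [if_neg (Ne.symm h), if_neg h]
  exact ⟨L.MO_pmat e, pmat e.symm, L.MO_pmat e.symm, h1, h2⟩

lemma conj_pmat (e : Equiv.Perm (Fin n)) (A : Matrix (Fin n) (Fin n) E) (i j : Fin n) :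
    L.conj (pmat e) A i j = A (e i) (e j) := by
  unfold conj
  rw [L.adj_pmat, mul_pmat_apply, pmat_mul_apply, Equiv.symm_symm]

end Matrices2


section Emb

variable {n : ℕ}

/-- extend a matrix by a 1 in the corner -/
def emb (M : Matrix (Fin n) (Fin n) E) : Matrix (Fin (n+1)) (Fin (n+1)) E :=
  Matrix.of (Fin.cons (Fin.cons 1 (fun _ => 0)) (fun i => Fin.cons 0 (fun j => M i j)))

/-- extend a matrix by a in the corner -/
def emb2 (a : E) (M : Matrix (Fin n) (Fin n) E) : Matrix (Fin (n+1)) (Fin (n+1)) E :=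
  Matrix.of (Fin.cons (Fin.cons a (fun _ => 0)) (fun i => Fin.cons 0 (fun j => M i j)))

@[simp] lemma emb_00 (M : Matrix (Fin n) (Fin n) E) : emb M 0 0 = 1 := by simp [emb]
@[simp] lemma emb_0s (M : Matrix (Fin n) (Fin n) E) (j : Fin n) : emb M 0 j.succ = 0 := by
  simp [emb]
@[simp] lemma emb_s0 (M : Matrix (Fin n) (Fin n) E) (i : Fin n) : emb M i.succ 0 = 0 := by
  simp [emb]
@[simp] lemma emb_ss (M : Matrix (Fin n) (Fin n) E) (i j : Fin n) :
    emb M i.succ j.succ = M i j := by simp [emb]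

@[simp] lemma emb2_00 (a : E) (M : Matrix (Fin n) (Fin n) E) : emb2 a M 0 0 = a := by
  simp [emb2]
@[simp] lemma emb2_0s (a : E) (M : Matrix (Fin n) (Fin n) E) (j : Fin n) :
    emb2 a M 0 j.succ = 0 := by simp [emb2]
@[simp] lemma emb2_s0 (a : E) (M : Matrix (Fin n) (Fin n) E) (i : Fin n) :
    emb2 a M i.succ 0 = 0 := by simp [emb2]
@[simp] lemma emb2_ss (a : E) (M : Matrix (Fin n) (Fin n) E) (i j : Fin n) :
    emb2 a M i.succ j.succ = M i j := by simp [emb2]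

lemma MO_emb {M : Matrix (Fin n) (Fin n) E} (hM : L.MO M) : L.MO (emb M) := by
  intro i j
  rcases Fin.eq_zero_or_eq_succ i with rfl | ⟨i', rfl⟩ <;>
    rcases Fin.eq_zero_or_eq_succ j with rfl | ⟨j', rfl⟩
  · simpa using L.O.one_mem
  · simpa using L.O.zero_mem
  · simpa using L.O.zero_mem
  · simpa using hM i' j'

lemma emb_mul (M N : Matrix (Fin n) (Fin n) E) : emb M * emb N = emb (M * N) := by
  ext i j
  rw [Matrix.mul_apply, Fin.sum_univ_succ]
  rcases Fin.eq_zero_or_eq_succ i with rfl | ⟨i', rfl⟩ <;>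
    rcases Fin.eq_zero_or_eq_succ j with rfl | ⟨j', rfl⟩ <;>
    simp [Matrix.mul_apply]

lemma emb_mul_emb2 (M : Matrix (Fin n) (Fin n) E) (a : E) (N : Matrix (Fin n) (Fin n) E) :
    emb M * emb2 a N = emb2 a (M * N) := by
  ext i j
  rw [Matrix.mul_apply, Fin.sum_univ_succ]
  rcases Fin.eq_zero_or_eq_succ i with rfl | ⟨i', rfl⟩ <;>
    rcases Fin.eq_zero_or_eq_succ j with rfl | ⟨j', rfl⟩ <;>
    simp [Matrix.mul_apply]

lemma emb2_mul_emb (a : E) (N M : Matrix (Fin n) (Fin n) E) :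
    emb2 a N * emb M = emb2 a (N * M) := by
  ext i j
  rw [Matrix.mul_apply, Fin.sum_univ_succ]
  rcases Fin.eq_zero_or_eq_succ i with rfl | ⟨i', rfl⟩ <;>
    rcases Fin.eq_zero_or_eq_succ j with rfl | ⟨j', rfl⟩ <;>
    simp [Matrix.mul_apply]

lemma emb_one : emb (1 : Matrix (Fin n) (Fin n) E) = 1 := by
  ext i j
  rcases Fin.eq_zero_or_eq_succ i with rfl | ⟨i', rfl⟩ <;>
    rcases Fin.eq_zero_or_eq_succ j with rfl | ⟨j', rfl⟩ <;>
    simp [Matrix.one_apply, Fin.succ_ne_zero, (Fin.succ_ne_zero _).symm, Fin.succ_inj]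

lemma adj_emb (M : Matrix (Fin n) (Fin n) E) : L.adj (emb M) = emb (L.adj M) := by
  ext i j
  rw [adj_apply]
  rcases Fin.eq_zero_or_eq_succ i with rfl | ⟨i', rfl⟩ <;>
    rcases Fin.eq_zero_or_eq_succ j with rfl | ⟨j', rfl⟩ <;>
    simp [adj_apply]

lemma uni_emb {M : Matrix (Fin n) (Fin n) E} (hM : L.IsUni M) : L.IsUni (emb M) := by
  obtain ⟨hMO, V, hVO, hMV, hVM⟩ := hM
  refine ⟨L.MO_emb hMO, emb V, L.MO_emb hVO, ?_, ?_⟩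
  · rw [emb_mul, hMV, emb_one]
  · rw [emb_mul, hVM, emb_one]

lemma emb2_diagonal (a : E) (d : Fin n → E) :
    emb2 a (Matrix.diagonal d) = Matrix.diagonal (Fin.cons a d) := by
  ext i j
  rcases Fin.eq_zero_or_eq_succ i with rfl | ⟨i', rfl⟩ <;>
    rcases Fin.eq_zero_or_eq_succ j with rfl | ⟨j', rfl⟩
  · simp
  · simp [Matrix.diagonal_apply, (Fin.succ_ne_zero _).symm]
  · simp [Matrix.diagonal_apply, Fin.succ_ne_zero]
  · rw [emb2_ss]
    by_cases h : i' = j'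
    · subst h
      simp
    · rw [Matrix.diagonal_apply_ne _ h,
        Matrix.diagonal_apply_ne _ (by simpa [Fin.succ_inj] using h)]

lemma conj_emb {U' A' : Matrix (Fin n) (Fin n) E} {B : Matrix (Fin (n+1)) (Fin (n+1)) E}
    {a : E} (h00 : B 0 0 = a) (hcol : ∀ i : Fin n, B i.succ 0 = 0)
    (hrow : ∀ j : Fin n, B 0 j.succ = 0) (hsub : ∀ i j, B i.succ j.succ = A' i j)
    {d' : Fin n → E} (hU' : L.conj U' A' = Matrix.diagonal d') :
    L.conj (emb U') B = Matrix.diagonal (Fin.cons a d') := by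
  have hB : B = emb2 a A' := by
    ext i j
    rcases Fin.eq_zero_or_eq_succ i with rfl | ⟨i', rfl⟩ <;>
      rcases Fin.eq_zero_or_eq_succ j with rfl | ⟨j', rfl⟩ <;>
      simp [h00, hcol, hrow, hsub]
  unfold conj
  rw [hB, L.adj_emb, emb_mul_emb2, emb2_mul_emb]
  have : U' * A' * L.adj U' = Matrix.diagonal d' := hU'
  rw [this, emb2_diagonal]

end Emb


/-- Main diagonalization (no normalization of diagonal entries). -/
lemma diag0 : ∀ (n : ℕ) (A : Matrix (Fin n) (Fin n) E), L.adj A = A → A.det ≠ 0 →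
    ∃ U, L.IsUni U ∧ ∃ d : Fin n → E, L.conj U A = Matrix.diagonal d := by
  intro n
  induction n with
  | zero =>
    intro A _ _
    refine ⟨1, L.uni_one, fun i => i.elim0, ?_⟩
    rw [L.conj_one]
    ext i j
    exact i.elim0
  | succ m IH =>
    intro A hherm hdet
    have hA0 : ∃ p : Fin (m+1) × Fin (m+1), A p.1 p.2 ≠ 0 := by
      by_contra h
      push_neg at h
      have hz : A = 0 := by ext i j; exact h (i, j)
      rw [hz] at hdet
      exact hdet Matrix.det_zero
    obtain ⟨p₀, _, hmin⟩ := Finset.exists_min_image Finset.univ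
      (fun p : Fin (m+1) × Fin (m+1) => L.v (A p.1 p.2)) ⟨(0,0), Finset.mem_univ _⟩
    obtain ⟨q, hq0⟩ := hA0
    have hminle : ∀ i j, L.v (A p₀.1 p₀.2) ≤ L.v (A i j) :=
      fun i j => hmin (i, j) (Finset.mem_univ _)
    have hp₀ne : A p₀.1 p₀.2 ≠ 0 := by
      intro h
      have h2 := hminle q.1 q.2
      rw [h, L.v0, top_le_iff] at h2
      exact hq0 ((L.hv0 _).1 h2)
    set μ := L.v (A p₀.1 p₀.2) with hμ
    -- Stage 1: a diagonal entry of minimal valuation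
    have stage1 : ∃ T₁, L.IsUni T₁ ∧ ∃ i₁ : Fin (m+1),
        L.v ((L.conj T₁ A) i₁ i₁) = μ ∧ ∀ i j, μ ≤ L.v ((L.conj T₁ A) i j) := by
      by_cases hdiag : ∃ i, L.v (A i i) ≤ μ
      · obtain ⟨i, hi⟩ := hdiag
        refine ⟨1, L.uni_one, i, ?_, ?_⟩
        · rw [L.conj_one]
          exact le_antisymm hi (hminle i i)
        · rw [L.conj_one]
          exact fun i j => hminle i j
      · push_neg at hdiag
        set i₀ := p₀.1 with hi₀
        set j₀ := p₀.2 with hj₀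
        have hne : i₀ ≠ j₀ := by
          intro h
          have h2 := hdiag i₀
          rw [hμ, h] at h2
          exact lt_irrefl _ h2
        set b := L.σ (A i₀ j₀) with hb
        have hbne : b ≠ 0 := L.σ_ne_zero hp₀ne
        have hvb : L.v b = μ := by rw [hb, L.vσ]
        obtain ⟨c, hcO, hcv, hctr⟩ := L.trace_pivot b hbne
        set g : Fin (m+1) → E := fun i => if i = i₀ then c else 0 with hg
        have hg0 : g j₀ = 0 := by rw [hg]; simp [Ne.symm hne]
        have hgO : ∀ i, g i ∈ L.O := by
          intro i
          rw [hg]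
          dsimp only
          split
          · exact hcO
          · exact L.O.zero_mem
        have huni := L.uni_one_add_colM j₀ g hg0 hgO
        refine ⟨1 + colM j₀ g, huni, i₀, ?_, ?_⟩
        · have hent := L.conj_one_add_colM j₀ g A i₀ i₀
          have hgi₀ : g i₀ = c := by rw [hg]; simp
          have hAji : A j₀ i₀ = b := by
            rw [hb]
            conv_lhs => rw [← hherm]
            rfl
          have hσb : L.σ b = A i₀ j₀ := by rw [hb, L.hσinv]
          have hsplit : (L.conj (1 + colM j₀ g) A) i₀ i₀
              = (c * b + L.σ c * L.σ b) + (A i₀ i₀ + c * A j₀ j₀ * L.σ c) := by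
            rw [hent, hgi₀, hAji, hσb]
            ring
          rw [hsplit, L.v_add_eq_left, hctr, hvb]
          rw [hctr, hvb]
          have h1 : μ < L.v (A i₀ i₀) := hdiag i₀
          have h2 : μ < L.v (c * A j₀ j₀ * L.σ c) := by
            rw [L.hvmul, L.hvmul, hcv, L.vσ, hcv, zero_add, add_zero]
            exact hdiag j₀
          refine lt_of_lt_of_le (lt_min h1 h2) (L.hvadd _ _)
        · intro i j
          refine L.v_conj_ge (fun i j => hminle i j) huni.1 (L.MO_adj huni.1) i j
    obtain ⟨T₁, hT₁uni, i₁, hB₁dd, hB₁min⟩ := stage1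
    set B₁ := L.conj T₁ A with hB₁
    have hB₁herm : L.adj B₁ = B₁ := L.adj_conj hherm
    have hB₁det : B₁.det ≠ 0 := L.conj_det_ne_zero hT₁uni hdet
    -- Stage 2: move it to the corner
    set e := Equiv.swap (0 : Fin (m+1)) i₁ with he
    set B₂ := L.conj (pmat e) B₁ with hB₂def
    have hB₂ : ∀ i j, B₂ i j = B₁ (e i) (e j) := fun i j => L.conj_pmat e B₁ i j
    have hB₂herm : L.adj B₂ = B₂ := L.adj_conj hB₁herm
    have hB₂det : B₂.det ≠ 0 := L.conj_det_ne_zero (L.uni_pmat e) hB₁det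
    have hB₂00 : L.v (B₂ 0 0) = μ := by
      rw [hB₂ 0 0, he, Equiv.swap_apply_left]
      exact hB₁dd
    have hB₂min : ∀ i j, μ ≤ L.v (B₂ i j) := by
      intro i j
      rw [hB₂ i j]
      exact hB₁min _ _
    -- Stage 3: clear first row and column
    set a := B₂ 0 0 with ha
    have hane : a ≠ 0 := by
      intro h
      rw [h, L.v0] at hB₂00
      exact L.vne_top hp₀ne hB₂00.symm
    obtain ⟨mz, hmz⟩ := L.ex_int hp₀ne
    set g2 : Fin (m+1) → E := fun i => if i = 0 then 0 else -(B₂ i 0 / a) with hg2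
    have hg20 : g2 0 = 0 := by rw [hg2]; simp
    have hg2O : ∀ i, g2 i ∈ L.O := by
      intro i
      rw [hg2]
      dsimp only
      split
      · exact L.O.zero_mem
      · refine L.O.neg_mem (L.mem_O.2 ?_)
        have hvainv : L.v a⁻¹ = ((-mz : ℤ) : WithTop ℤ) := by
          rw [L.vinv hane, hB₂00, hμ, hmz]
          rfl
        rw [div_eq_mul_inv, L.hvmul, hvainv]
        have h1 := hB₂min i 0
        rw [hμ, hmz] at h1
        calc (0 : WithTop ℤ) = ((mz + -mz : ℤ) : WithTop ℤ) := by norm_num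
          _ = ((mz : ℤ) : WithTop ℤ) + ((-mz : ℤ) : WithTop ℤ) := by push_cast; rfl
          _ ≤ L.v (B₂ i 0) + ((-mz : ℤ) : WithTop ℤ) := add_le_add h1 le_rfl
    have huni3 := L.uni_one_add_colM 0 g2 hg20 hg2O
    set B₃ := L.conj (1 + colM 0 g2) B₂ with hB₃def
    have hB₃ : ∀ i j, B₃ i j = B₂ i j + g2 i * B₂ 0 j + B₂ i 0 * L.σ (g2 j)
        + g2 i * B₂ 0 0 * L.σ (g2 j) := fun i j => L.conj_one_add_colM 0 g2 B₂ i j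
    have hB₃herm : L.adj B₃ = B₃ := L.adj_conj hB₂herm
    have hB₃det : B₃.det ≠ 0 := L.conj_det_ne_zero huni3 hB₂det
    have hσg20 : L.σ (g2 0) = 0 := by rw [hg20, map_zero]
    have hB₃00 : B₃ 0 0 = a := by
      rw [hB₃ 0 0, hσg20, hg20, ha]
      ring
    have hB₃col : ∀ i : Fin m, B₃ i.succ 0 = 0 := by
      intro i
      rw [hB₃ i.succ 0, hσg20]
      have hgi : g2 i.succ = -(B₂ i.succ 0 / a) := by
        rw [hg2]; simp [Fin.succ_ne_zero]
      rw [hgi, ← ha]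
      field_simp
      ring
    have hB₃row : ∀ j : Fin m, B₃ 0 j.succ = 0 := by
      intro j
      have : B₃ 0 j.succ = L.adj B₃ 0 j.succ := by rw [hB₃herm]
      rw [this, adj_apply, hB₃col j, map_zero]
    -- Stage 4: the submatrix
    set A' := Matrix.of (fun i j : Fin m => B₃ i.succ j.succ) with hA'
    have hsub : ∀ i j : Fin m, B₃ i.succ j.succ = A' i j := fun i j => rfl
    have hA'herm : L.adj A' = A' := by
      ext i j
      rw [adj_apply]
      have h1 : A' j i = B₃ j.succ i.succ := rfl
      have h2 : L.σ (B₃ j.succ i.succ) = L.adj B₃ i.succ j.succ := rfl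
      rw [h1, h2, hB₃herm]
      rfl
    have hdet3 : B₃.det = a * A'.det := by
      rw [Matrix.det_succ_row_zero, Finset.sum_eq_single 0]
      · rw [hB₃00, Fin.succAbove_zero]
        have : B₃.submatrix Fin.succ Fin.succ = A' := by
          ext i j
          rfl
        rw [this]
        simp
      · intro b _ hb
        rcases Fin.eq_zero_or_eq_succ b with rfl | ⟨b', rfl⟩
        · exact absurd rfl hb
        · rw [hB₃row b', mul_zero, zero_mul]
      · intro hh
        exact absurd (Finset.mem_univ _) hh
    have hA'det : A'.det ≠ 0 := by
      intro h
      rw [hdet3, h, mul_zero] at hB₃det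
      exact hB₃det rfl
    obtain ⟨U', hU'uni, d', hU'⟩ := IH A' hA'herm hA'det
    -- Assemble
    refine ⟨emb U' * ((1 + colM 0 g2) * (pmat e * T₁)), ?_, Fin.cons a d', ?_⟩
    · exact L.uni_mul (L.uni_emb hU'uni)
        (L.uni_mul huni3 (L.uni_mul (L.uni_pmat e) hT₁uni))
    · rw [← L.conj_conj, ← L.conj_conj, ← L.conj_conj]
      exact L.conj_emb hB₃00 hB₃col hB₃row hsub hU'

end Loc

/-- over a non-archimedean local field `E` (fraction field of a complete DVR `O`
with finite residue field, encoded via the valuation `v`, completeness, and a finite system of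
residue representatives), with `σ` an involutive automorphism fixing `π` and preserving `O`
whose induced residue automorphism is nontrivial (so `E` is unramified quadratic over the fixed
field), every nonsingular Hermitian matrix `A = A*` admits `U ∈ GL_n(O)` and integers
`λ₁ ≥ … ≥ λ_n` with `U·A·U* = diag(π^{λ₁}, …, π^{λ_n})`. -/
theorem stmt1 {E : Type} [Field E] (v : E → WithTop ℤ)
    (hv0 : ∀ x, v x = ⊤ ↔ x = 0)
    (hvmul : ∀ x y, v (x * y) = v x + v y)
    (hvadd : ∀ x y, min (v x) (v y) ≤ v (x + y))
    (π : E) (hπ : v π = 1)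
    (O : Subring E) (hO : ∀ x, x ∈ O ↔ 0 ≤ v x)
    -- completeness of `E` with respect to `v`
    (hcomplete : ∀ f : ℕ → E,
      (∀ N : ℤ, ∃ M : ℕ, ∀ m₁ m₂ : ℕ, M ≤ m₁ → M ≤ m₂ → (N : WithTop ℤ) ≤ v (f m₁ - f m₂)) →
      ∃ L : E, ∀ N : ℤ, ∃ M : ℕ, ∀ m₁ : ℕ, M ≤ m₁ → (N : WithTop ℤ) ≤ v (f m₁ - L))
    -- finiteness of the residue field `O/(π)`
    (hfinres : ∃ S : Finset E, ∀ x ∈ O, ∃ y ∈ S, (1 : WithTop ℤ) ≤ v (x - y))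
    (σ : E →+* E) (hσinv : ∀ x, σ (σ x) = x) (hσne : σ ≠ RingHom.id E)
    (hσO : ∀ x ∈ O, σ x ∈ O) (hσπ : σ π = π)
    -- the induced automorphism of the residue field is not the identity
    (hσres : ∃ x ∈ O, v (σ x - x) ≤ 0)
    (n : ℕ) (A : Matrix (Fin n) (Fin n) E)
    (hA : (A.map σ).transpose = A) (hdet : A.det ≠ 0) :
    ∃ (U : Matrix (Fin n) (Fin n) E) (lam : ℕ → ℤ),
      (∀ i j, U i j ∈ O) ∧
      (∃ V : Matrix (Fin n) (Fin n) E, (∀ i j, V i j ∈ O) ∧ U * V = 1 ∧ V * U = 1) ∧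
      (∀ i j, i ≤ j → j < n → lam j ≤ lam i) ∧
      U * A * (U.map σ).transpose = Matrix.diagonal fun i : Fin n => π ^ lam i.val := by
  classical
  set L : Loc E := ⟨v, hv0, hvmul, hvadd, π, hπ, O, hO, σ, hσinv, hσO, hσπ, hσres,
    hcomplete, hfinres⟩ with hL
  have hherm : L.adj A = A := hA
  obtain ⟨U₀, hU₀uni, d, hconj⟩ := L.diag0 n A hherm hdet
  have hdetd : (Matrix.diagonal d).det ≠ 0 := by
    rw [← hconj]
    exact L.conj_det_ne_zero hU₀uni hdet
  have hdne : ∀ i, d i ≠ 0 := by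
    intro i
    rw [Matrix.det_diagonal] at hdetd
    exact Finset.prod_ne_zero_iff.1 hdetd i (Finset.mem_univ i)
  have hadjd : L.adj (Matrix.diagonal d) = Matrix.diagonal d := by
    rw [← hconj]
    exact L.adj_conj hherm
  have hfix : ∀ i, L.σ (d i) = d i := by
    intro i
    have h2 := congrFun (congrFun hadjd i) i
    rwa [L.adj_apply, Matrix.diagonal_apply_eq] at h2
  choose lam0 hlam0 using fun i => L.ex_int (hdne i)
  have hγ : ∀ i, ∃ w : E, L.v w = 0 ∧ w * L.σ w = L.pi ^ (lam0 i) * (d i)⁻¹ := by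
    intro i
    apply L.norm_surj
    · rw [L.hvmul, L.v_zpow, L.vinv (hdne i), hlam0 i, ← WithTop.LinearOrderedAddCommGroup.coe_neg, ← WithTop.coe_add]
      norm_num
    · rw [map_mul, map_zpow₀, L.hσπ, map_inv₀, hfix]
  choose w hw1 hw2 using hγ
  have hWadj : L.adj (Matrix.diagonal w) = Matrix.diagonal (fun i => L.σ (w i)) := by
    ext i j
    rw [L.adj_apply]
    by_cases h : i = j
    · subst h
      rw [Matrix.diagonal_apply_eq, Matrix.diagonal_apply_eq]
    · rw [Matrix.diagonal_apply_ne _ (Ne.symm h), map_zero, Matrix.diagonal_apply_ne _ h]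
  have hMOdiag : L.MO (Matrix.diagonal w) := by
    intro i j
    by_cases h : i = j
    · subst h
      rw [Matrix.diagonal_apply_eq]
      exact L.unit_mem (hw1 i)
    · rw [Matrix.diagonal_apply_ne _ h]
      exact L.O.zero_mem
  have hWuni : L.IsUni (Matrix.diagonal w) := by
    refine ⟨hMOdiag, Matrix.diagonal (fun i => (w i)⁻¹), ?_, ?_, ?_⟩
    · intro i j
      by_cases h : i = j
      · subst h
        rw [Matrix.diagonal_apply_eq]
        exact L.unit_inv_mem (hw1 i)
      · rw [Matrix.diagonal_apply_ne _ h]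
        exact L.O.zero_mem
    · rw [Matrix.diagonal_mul_diagonal]
      have : (fun i => w i * (w i)⁻¹) = fun _ => (1:E) :=
        funext fun i => mul_inv_cancel₀ (L.unit_ne_zero (hw1 i))
      rw [this, Matrix.diagonal_one]
    · rw [Matrix.diagonal_mul_diagonal]
      have : (fun i => (w i)⁻¹ * w i) = fun _ => (1:E) :=
        funext fun i => inv_mul_cancel₀ (L.unit_ne_zero (hw1 i))
      rw [this, Matrix.diagonal_one]
  have hWconj : L.conj (Matrix.diagonal w) (Matrix.diagonal d)
      = Matrix.diagonal (fun i => L.pi ^ lam0 i) := by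
    show Matrix.diagonal w * Matrix.diagonal d * L.adj (Matrix.diagonal w) = _
    rw [hWadj, Matrix.diagonal_mul_diagonal, Matrix.diagonal_mul_diagonal]
    have hentry : (fun i => w i * d i * L.σ (w i)) = fun i => L.pi ^ lam0 i := by
      funext i
      calc w i * d i * L.σ (w i) = d i * (w i * L.σ (w i)) := by ring
        _ = d i * (L.pi ^ lam0 i * (d i)⁻¹) := by rw [hw2 i]
        _ = L.pi ^ lam0 i := by
            rw [mul_comm (d i) _, mul_assoc, inv_mul_cancel₀ (hdne i), mul_one]
    rw [hentry]
  set f : Fin n → ℤ := fun i => -(lam0 i) with hf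
  set ep := Tuple.sort f with hep
  have hmono := Tuple.monotone_sort f
  have hPconj : L.conj (Loc.pmat ep : Matrix (Fin n) (Fin n) E) (Matrix.diagonal (fun i => L.pi ^ lam0 i))
      = Matrix.diagonal (fun i => L.pi ^ (lam0 (ep i))) := by
    ext i j
    rw [L.conj_pmat]
    by_cases h : i = j
    · subst h
      rw [Matrix.diagonal_apply_eq, Matrix.diagonal_apply_eq]
    · rw [Matrix.diagonal_apply_ne _ (fun hc => h (ep.injective hc)),
        Matrix.diagonal_apply_ne _ h]
  have huniT := L.uni_mul (L.uni_pmat ep) (L.uni_mul hWuni hU₀uni)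
  obtain ⟨hTMO, V, hVMO, hUV, hVU⟩ := huniT
  refine ⟨(Loc.pmat ep : Matrix (Fin n) (Fin n) E) * (Matrix.diagonal w * U₀),
    fun k => if hk : k < n then lam0 (ep ⟨k, hk⟩) else 0,
    fun i j => hTMO i j, ⟨V, fun i j => hVMO i j, hUV, hVU⟩, ?_, ?_⟩
  · intro i j hij hjn
    have hin : i < n := lt_of_le_of_lt hij hjn
    simp only [dif_pos hjn, dif_pos hin]
    have h2 := hmono (a := ⟨i, hin⟩) (b := ⟨j, hjn⟩) hij
    simp only [Function.comp_apply, hf, ← hep] at h2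
    simp only [hep, hf]
    omega
  · have hfinal : L.conj ((Loc.pmat ep : Matrix (Fin n) (Fin n) E) * (Matrix.diagonal w * U₀)) A
        = Matrix.diagonal (fun i => L.pi ^ (lam0 (ep i))) := by
      rw [← L.conj_conj, ← L.conj_conj, hconj, hWconj, hPconj]
    have hfun : (fun i : Fin n => π ^ (if hk : (i:ℕ) < n then lam0 (ep ⟨(i:ℕ), hk⟩) else 0))
        = fun i => L.pi ^ lam0 (ep i) := by
      funext i
      rw [dif_pos i.isLt]
    exact hfun ▸ hfinal
end

section
/- Let k ≥ 1, let D be a (2k−1)×(2k−1) alternating matrix over F, and let α_1, α_2 be column vectors of length 2k−1 over F. Define the 2k×2k matrices D_1 = [[0, α_1ᵀ],[−α_1, D]], D_2 = [[0, α_2ᵀ],[−α_2, D]], and D_{12} = [[0, (α_1+α_2)ᵀ],[−(α_1+α_2), D]] (block matrices with upper-left 1×1 block). Then there exists s ∈ F such that s² = det(D_1)·det(D_2) and det(D_{12}) = det(D_1) + det(D_2) + 2s. -/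
/-- The `2k × 2k` matrix `[[0, αᵀ], [−α, D]]` (upper-left block `1 × 1`). -/
def borderAlt {F : Type} [Field F] {p : ℕ} (D : Matrix (Fin p) (Fin p) F) (α : Fin p → F) :
    Matrix (Fin 1 ⊕ Fin p) (Fin 1 ⊕ Fin p) F :=
  Matrix.fromBlocks 0 (Matrix.of fun _ j => α j) (Matrix.of fun i _ => -α i) D

section Aux

open Matrix

variable {F : Type} [Field F] {p : ℕ}

/-- Determinant of an odd-size alternating matrix vanishes (any characteristic). -/
lemma det_alt_odd (hp : Odd p) (D : Matrix (Fin p) (Fin p) F)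
    (hDalt : Dᵀ = -D) (hDdiag : ∀ i, D i i = 0) : D.det = 0 := by
  have hD : ∀ i j, D j i = - D i j := by
    intro i j
    have := congrFun (congrFun hDalt i) j
    simpa [Matrix.transpose_apply] using this
  rw [Matrix.det_apply]
  refine Finset.sum_ninvolution (fun σ => σ⁻¹) ?_ ?_ (fun _ => Finset.mem_univ _)
    (fun σ => inv_inv σ)
  · -- f σ + f σ⁻¹ = 0
    intro σ
    have key : ∏ i, D (σ⁻¹ i) i = - ∏ i, D (σ i) i := by
      have h1 : ∏ i, D (σ⁻¹ i) i = ∏ i, D (σ⁻¹ (σ i)) (σ i) :=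
        (Equiv.prod_comp σ (fun i => D (σ⁻¹ i) i)).symm
      rw [h1]
      simp only [← Equiv.Perm.mul_apply, inv_mul_cancel, Equiv.Perm.one_apply]
      have h2 : ∀ i, D i (σ i) = -1 * D (σ i) i := by intro i; rw [hD]; ring
      calc ∏ i, D i (σ i) = ∏ i, (-1 * D (σ i) i) := Finset.prod_congr rfl (fun i _ => h2 i)
        _ = (-1)^(Fintype.card (Fin p)) * ∏ i, D (σ i) i := by
            rw [Finset.prod_mul_distrib, Finset.prod_const, Finset.card_univ]
        _ = - ∏ i, D (σ i) i := by
            rw [Fintype.card_fin, hp.neg_one_pow]; ring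
    rw [Equiv.Perm.sign_inv, key, smul_neg, add_neg_cancel]
  · -- f σ ≠ 0 → σ⁻¹ ≠ σ
    intro σ hne
    intro heq
    apply hne
    by_cases hfix : ∃ i, σ i = i
    · obtain ⟨i, hi⟩ := hfix
      have : ∏ j, D (σ j) j = 0 :=
        Finset.prod_eq_zero (Finset.mem_univ i) (by rw [hi]; exact hDdiag i)
      rw [this, smul_zero]
    · push_neg at hfix
      exfalso
      have h2 : σ ^ 2 = 1 := by
        rw [sq]
        nth_rewrite 2 [← heq]
        simp
      have hsupp : σ.support = Finset.univ := by
        apply Finset.eq_univ_iff_forall.2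
        intro i; exact Equiv.Perm.mem_support.2 (hfix i)
      have := Equiv.Perm.two_dvd_card_support h2
      rw [hsupp, Finset.card_univ, Fintype.card_fin] at this
      rw [Nat.odd_iff] at hp
      omega

/-- The bordered matrix `[[0, xᵀ],[−y, D]]`. -/
def bmat (D : Matrix (Fin p) (Fin p) F) (x y : Fin p → F) :
    Matrix (Fin 1 ⊕ Fin p) (Fin 1 ⊕ Fin p) F :=
  Matrix.fromBlocks 0 (Matrix.of fun _ j => x j) (Matrix.of fun i _ => -y i) D

/-- The associated bilinear form: the determinant of the bordered matrix. -/
def bAux (D : Matrix (Fin p) (Fin p) F) (x y : Fin p → F) : F := (bmat D x y).det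

lemma bAux_symm (hp : Odd p) (D : Matrix (Fin p) (Fin p) F) (hDalt : Dᵀ = -D)
    (x y : Fin p → F) : bAux D x y = bAux D y x := by
  unfold bAux
  rw [← Matrix.det_transpose]
  have htr : (bmat D x y)ᵀ = -(bmat D y x) := by
    ext i j
    have hD : ∀ a b, D b a = -D a b := fun a b => by
      have := congrFun (congrFun hDalt a) b; simpa [Matrix.transpose_apply] using this
    rcases i with i | i <;> rcases j with j | j <;>
      simp only [bmat, Matrix.fromBlocks, Matrix.transpose_apply, Matrix.neg_apply,
        Matrix.of_apply, Sum.elim_inl, Sum.elim_inr, Matrix.zero_apply, neg_neg, neg_zero,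
        Sum.elim_lam_const_lam_const] <;>
      first
        | rfl
        | exact hD i j
  rw [htr, Matrix.det_neg]
  have hcard : Fintype.card (Fin 1 ⊕ Fin p) = 1 + p := by simp
  have heven : Even (1 + p) := by
    obtain ⟨m, hm⟩ := hp; exact ⟨m + 1, by omega⟩
  rw [hcard, heven.neg_one_pow, one_mul]

lemma bmat_eq_updateRow (D : Matrix (Fin p) (Fin p) F) (x z y : Fin p → F) :
    bmat D x y = (bmat D z y).updateRow (Sum.inl 0) (Sum.elim 0 x) := by
  ext i j
  rcases i with i | i
  · have : i = 0 := Subsingleton.elim _ _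
    subst this
    rw [Matrix.updateRow_self]
    rcases j with j | j <;> simp [bmat, Matrix.fromBlocks]
  · rw [Matrix.updateRow_ne (by simp)]
    rcases j with j | j <;> simp [bmat, Matrix.fromBlocks]

lemma bAux_add_left (D : Matrix (Fin p) (Fin p) F) (x1 x2 y : Fin p → F) :
    bAux D (x1 + x2) y = bAux D x1 y + bAux D x2 y := by
  unfold bAux
  rw [bmat_eq_updateRow D (x1 + x2) x1 y, bmat_eq_updateRow D x2 x1 y]
  nth_rewrite 2 [bmat_eq_updateRow D x1 x1 y]
  have : (Sum.elim 0 (x1 + x2) : Fin 1 ⊕ Fin p → F)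
      = Sum.elim (0 : Fin 1 → F) x1 + Sum.elim (0 : Fin 1 → F) x2 := by
    ext (i | i) <;> simp
  rw [this, Matrix.det_updateRow_add]

lemma bAux_smul_left (D : Matrix (Fin p) (Fin p) F) (c : F) (x y : Fin p → F) :
    bAux D (c • x) y = c * bAux D x y := by
  unfold bAux
  rw [bmat_eq_updateRow D (c • x) x y]
  nth_rewrite 2 [bmat_eq_updateRow D x x y]
  have : (Sum.elim 0 (c • x) : Fin 1 ⊕ Fin p → F) = c • Sum.elim (0 : Fin 1 → F) x := by
    ext (i | i) <;> simp
  rw [this, Matrix.det_updateRow_smul]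

/-- `bAux` vanishes when the second vector lies in the column space of `D`. -/
lemma bAux_mulVec (D : Matrix (Fin p) (Fin p) F) (hdet : D.det = 0) (x z : Fin p → F) :
    bAux D x (D.mulVec z) = 0 := by
  unfold bAux bmat
  set M := Matrix.fromBlocks (0 : Matrix (Fin 1) (Fin 1) F) (Matrix.of fun _ j => x j)
      (Matrix.of fun i _ => -(D.mulVec z) i) D with hM
  set T : Matrix (Fin 1 ⊕ Fin p) (Fin 1 ⊕ Fin p) F :=
    Matrix.fromBlocks 1 0 (Matrix.of fun i _ => z i) 1 with hT
  have hdetT : T.det = 1 := by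
    rw [hT, Matrix.det_fromBlocks_zero₁₂]; simp
  have hmul : M * T = Matrix.fromBlocks (Matrix.of fun _ _ => ∑ j, x j * z j)
      (Matrix.of fun _ j => x j) 0 D := by
    rw [hM, hT, Matrix.fromBlocks_multiply]
    ext (i | i) (j | j) <;>
      simp [Matrix.mul_apply, Matrix.fromBlocks, Matrix.mulVec, dotProduct, mul_comm]
  have h2 : M.det * T.det = 0 := by
    rw [← Matrix.det_mul, hmul, Matrix.det_fromBlocks_zero₂₁, hdet, mul_zero]
  rw [hdetT, mul_one] at h2
  exact h2

/-- The embedding of `Fin p → F` into `Fin 1 ⊕ Fin p → F`. -/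
noncomputable def iotaAux : (Fin p → F) →ₗ[F] (Fin 1 ⊕ Fin p → F) where
  toFun u := Sum.elim 0 u
  map_add' u v := by ext (i | i) <;> simp
  map_smul' c u := by ext (i | i) <;> simp

/-- If `D` has corank at least 2 then the bordered determinant always vanishes. -/
lemma bAux_eq_zero_of_small_rank (D : Matrix (Fin p) (Fin p) F) (x y : Fin p → F)
    (hrk : Module.finrank F (LinearMap.range D.mulVecLin) + 2 ≤ p) :
    bAux D x y = 0 := by
  unfold bAux bmat
  set W := LinearMap.range D.mulVecLin with hW
  set M := Matrix.fromBlocks (0 : Matrix (Fin 1) (Fin 1) F) (Matrix.of fun _ j => x j)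
      (Matrix.of fun i _ => -y i) D with hM
  set E0 : Fin 1 ⊕ Fin p → F := Sum.elim 1 0 with hE0
  set Y : Fin 1 ⊕ Fin p → F := Sum.elim 0 y with hY
  set U : Submodule F (Fin 1 ⊕ Fin p → F) :=
    Submodule.span F {E0, Y} ⊔ Submodule.map (iotaAux) W with hU
  have hmem : ∀ v : Fin 1 ⊕ Fin p → F, M.mulVec v ∈ U := by
    intro v
    have hdecomp : M.mulVec v = (∑ j, x j * v (Sum.inr j)) • E0 + (-(v (Sum.inl 0))) • Y
        + iotaAux (D.mulVec (v ∘ Sum.inr)) := by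
      ext (i | i)
      · have : i = 0 := Subsingleton.elim _ _
        subst this
        simp [Matrix.mulVec, dotProduct, Fintype.sum_sum_type, hM, Matrix.fromBlocks,
          hE0, hY, iotaAux]
      · simp [Matrix.mulVec, dotProduct, Fintype.sum_sum_type, hM, Matrix.fromBlocks,
          hE0, hY, iotaAux, neg_mul, mul_comm]
    rw [hdecomp]
    refine Submodule.add_mem _ (Submodule.add_mem _ ?_ ?_) ?_
    · exact Submodule.mem_sup_left (Submodule.smul_mem _ _
        (Submodule.subset_span (by simp)))
    · exact Submodule.mem_sup_left (Submodule.smul_mem _ _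
        (Submodule.subset_span (by simp)))
    · exact Submodule.mem_sup_right ⟨D.mulVec (v ∘ Sum.inr), ⟨v ∘ Sum.inr, rfl⟩, rfl⟩
  have hUrank : Module.finrank F U ≤ p := by
    have h1 : Module.finrank F U ≤ Module.finrank F (Submodule.span F {E0, Y} : Submodule F _)
        + Module.finrank F (Submodule.map (iotaAux) W) := by
      have := Submodule.finrank_sup_add_finrank_inf_eq (Submodule.span F {E0, Y})
        (Submodule.map (iotaAux) W)
      rw [← hU] at this
      omega
    have h2 : Module.finrank F (Submodule.span F ({E0, Y} : Set _)) ≤ 2 := by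
      classical
      refine le_trans (finrank_span_le_card _) ?_
      simp [Set.toFinset_insert]
      exact Finset.card_insert_le _ _
    have h3 : Module.finrank F (Submodule.map (iotaAux) W) ≤ Module.finrank F W :=
      Submodule.finrank_map_le _ _
    omega
  have hrange : LinearMap.range M.mulVecLin ≤ U := by
    rintro _ ⟨v, rfl⟩
    simpa [Matrix.mulVecLin_apply] using hmem v
  have hker : LinearMap.ker M.mulVecLin ≠ ⊥ := by
    intro hbot
    have := LinearMap.finrank_range_add_finrank_ker M.mulVecLin
    rw [hbot, finrank_bot] at this
    have hle : Module.finrank F (LinearMap.range M.mulVecLin) ≤ p :=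
      le_trans (Submodule.finrank_mono hrange) hUrank
    rw [Module.finrank_fintype_fun_eq_card] at this
    simp [Fintype.card_sum] at this
    omega
  obtain ⟨v, hv, hv0⟩ := Submodule.exists_mem_ne_zero_of_ne_bot hker
  rw [← Matrix.exists_mulVec_eq_zero_iff]
  exact ⟨v, hv0, by simpa [Matrix.mulVecLin_apply] using hv⟩

/-- Key quadratic identity: the bordered determinant form has rank at most one. -/
lemma bAux_sq (hp : Odd p) (D : Matrix (Fin p) (Fin p) F)
    (hDalt : Dᵀ = -D) (hDdiag : ∀ i, D i i = 0) (x y : Fin p → F) :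
    (bAux D x y) ^ 2 = bAux D x x * bAux D y y := by
  have hdet : D.det = 0 := det_alt_odd hp D hDalt hDdiag
  have hrad : ∀ (w z : Fin p → F), bAux D w (D.mulVec z) = 0 := bAux_mulVec D hdet
  set W := LinearMap.range D.mulVecLin with hWdef
  have hp0 : 0 < p := by
    rcases hp with ⟨m, hm⟩; omega
  have hWlt : Module.finrank F W < p := by
    obtain ⟨v, hv0, hv⟩ := Matrix.exists_mulVec_eq_zero_iff.2 hdet
    have hker : LinearMap.ker D.mulVecLin ≠ ⊥ :=
      Submodule.ne_bot_iff _ |>.2 ⟨v, by simpa [Matrix.mulVecLin_apply] using hv, hv0⟩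
    have hrn := LinearMap.finrank_range_add_finrank_ker D.mulVecLin
    rw [Module.finrank_fintype_fun_eq_card, Fintype.card_fin] at hrn
    rw [← hWdef] at hrn
    have hkpos : Module.finrank F (LinearMap.ker D.mulVecLin) ≠ 0 := by
      intro h0
      exact hker (Submodule.finrank_eq_zero.1 h0)
    omega
  by_cases hcase : Module.finrank F W + 2 ≤ p
  · rw [bAux_eq_zero_of_small_rank D x y hcase, bAux_eq_zero_of_small_rank D x x hcase,
      bAux_eq_zero_of_small_rank D y y hcase]
    ring
  · -- corank exactly one
    have hWne : W ≠ ⊤ := by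
      intro htop
      rw [htop, finrank_top, Module.finrank_fintype_fun_eq_card, Fintype.card_fin] at hWlt
      omega
    obtain ⟨u, -, hu⟩ := SetLike.exists_of_lt (show W < ⊤ from lt_of_le_of_ne le_top hWne)
    have hsup : Submodule.span F {u} ⊔ W = ⊤ := by
      have hlt : W < Submodule.span F {u} ⊔ W := by
        refine lt_of_le_of_ne le_sup_right ?_
        intro hEq
        exact hu (hEq ▸ Submodule.mem_sup_left (Submodule.subset_span rfl))
      have h1 := Submodule.finrank_lt_finrank_of_lt hlt
      apply Submodule.eq_top_of_finrank_eq
      have h2 : Module.finrank F (Submodule.span F {u} ⊔ W : Submodule F (Fin p → F)) ≤ p := by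
        have := Submodule.finrank_le (Submodule.span F {u} ⊔ W : Submodule F (Fin p → F))
        rwa [Module.finrank_fintype_fun_eq_card, Fintype.card_fin] at this
      rw [Module.finrank_fintype_fun_eq_card, Fintype.card_fin]
      omega
    have hdecomp : ∀ w : Fin p → F, ∃ (c : F) (z : Fin p → F), w = c • u + D.mulVec z := by
      intro w
      have hw : w ∈ Submodule.span F {u} ⊔ W := by rw [hsup]; trivial
      rcases Submodule.mem_sup.1 hw with ⟨a, ha, b, hb, hab⟩
      rcases Submodule.mem_span_singleton.1 ha with ⟨c, rfl⟩
      rcases hb with ⟨z, rfl⟩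
      exact ⟨c, z, by rw [← hab]; rfl⟩
    have hgen : ∀ (c : F) (z w : Fin p → F), bAux D (c • u + D.mulVec z) w = c * bAux D u w := by
      intro c z w
      rw [bAux_add_left, bAux_smul_left, bAux_symm hp D hDalt (D.mulVec z) w, hrad, add_zero]
    obtain ⟨cx, zx, hx⟩ := hdecomp x
    obtain ⟨cy, zy, hy⟩ := hdecomp y
    have ex : bAux D x y = cx * (cy * bAux D u u) := by
      rw [hx, hgen, bAux_symm hp D hDalt u y, hy, hgen]
    have exx : bAux D x x = cx * (cx * bAux D u u) := by
      rw [hx, hgen, bAux_symm hp D hDalt u (cx • u + D.mulVec zx), hgen]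
    have eyy : bAux D y y = cy * (cy * bAux D u u) := by
      rw [hy, hgen, bAux_symm hp D hDalt u (cy • u + D.mulVec zy), hgen]
    rw [ex, exx, eyy]
    ring

end Aux

/-- for an alternating `(2k−1) × (2k−1)` matrix `D` over a field `F` and column
vectors `α₁, α₂`, with `D₁ = [[0, α₁ᵀ],[−α₁, D]]`, `D₂ = [[0, α₂ᵀ],[−α₂, D]]` and
`D₁₂ = [[0, (α₁+α₂)ᵀ],[−(α₁+α₂), D]]`, there is `s ∈ F` with `s² = det D₁ · det D₂` and
`det D₁₂ = det D₁ + det D₂ + 2s`. -/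
theorem stmt5 {F : Type} [Field F] (k : ℕ) (hk : 1 ≤ k)
    (D : Matrix (Fin (2 * k - 1)) (Fin (2 * k - 1)) F)
    (hDalt : D.transpose = -D) (hDdiag : ∀ i, D i i = 0)
    (a1 a2 : Fin (2 * k - 1) → F) :
    ∃ s : F,
      s ^ 2 = (borderAlt D a1).det * (borderAlt D a2).det ∧
      (borderAlt D (a1 + a2)).det = (borderAlt D a1).det + (borderAlt D a2).det + 2 * s := by
  have hp : Odd (2 * k - 1) := ⟨k - 1, by omega⟩
  have hmat : ∀ a : Fin (2 * k - 1) → F, (borderAlt D a).det = bAux D a a := fun a => rfl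
  refine ⟨bAux D a1 a2, ?_, ?_⟩
  · rw [hmat, hmat]
    exact bAux_sq hp D hDalt hDdiag a1 a2
  · rw [hmat, hmat, hmat]
    have h1 : bAux D (a1 + a2) (a1 + a2) = bAux D a1 (a1 + a2) + bAux D a2 (a1 + a2) :=
      bAux_add_left D a1 a2 (a1 + a2)
    have h2 : bAux D a1 (a1 + a2) = bAux D a1 a1 + bAux D a2 a1 := by
      rw [bAux_symm hp D hDalt a1 (a1 + a2), bAux_add_left, bAux_symm hp D hDalt a1 a1]
    have h3 : bAux D a2 (a1 + a2) = bAux D a1 a2 + bAux D a2 a2 := by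
      rw [bAux_symm hp D hDalt a2 (a1 + a2), bAux_add_left, bAux_symm hp D hDalt a2 a2]
    have h4 : bAux D a2 a1 = bAux D a1 a2 := bAux_symm hp D hDalt a2 a1
    rw [h1, h2, h3, h4]
    ring
end

section
/- Let k be a finite field with q elements and n ≥ 1. Then the number of invertible alternating 2n×2n matrices over k equals q^{n(2n−1)} · ∏_{i=1}^{n} (1 − q^{1−2i}); equivalently, since the total number of alternating 2n×2n matrices over k is q^{n(2n−1)}, the proportion of alternating 2n×2n matrices over k that are invertible is ∏_{i=1}^{n} (1 − q^{1−2i}). -/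
open scoped Classical
open Matrix

variable {k : Type*} [Field k]

lemma quad_zero_s7 {ι : Type*} [Fintype ι]
    {A : Matrix ι ι k} (h1 : A.transpose = -A) (h2 : ∀ i, A i i = 0) (x : ι → k) :
    x ⬝ᵥ (A *ᵥ x) = 0 := by
  have hA : ∀ a b, A b a = - A a b := by
    intro a b
    have := congrFun (congrFun h1 a) b
    simpa [Matrix.transpose_apply] using this
  have : x ⬝ᵥ (A *ᵥ x) = ∑ p ∈ Finset.univ ×ˢ Finset.univ, x p.1 * A p.1 p.2 * x p.2 := by
    simp [dotProduct, Matrix.mulVec, Finset.mul_sum, mul_assoc, ← Finset.sum_product']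
  rw [this]
  refine Finset.sum_ninvolution Prod.swap ?_ ?_ (by simp) (by simp)
  · rintro ⟨a, b⟩
    by_cases hab : a = b
    · subst hab; simp [h2]
    · simp only [Prod.swap]
      rw [hA a b]; ring
  · rintro ⟨a, b⟩ hf h
    have : a = b := by simpa [Prod.ext_iff, eq_comm] using h
    subst this
    exact hf (by simp [h2])

lemma alt_conj {ι : Type*} [Fintype ι] [DecidableEq ι]
    {A : Matrix ι ι k} (h1 : A.transpose = -A) (h2 : ∀ i, A i i = 0) (P : Matrix ι ι k) :
    (Pᵀ * A * P)ᵀ = -(Pᵀ * A * P) ∧ ∀ i, (Pᵀ * A * P) i i = 0 := by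
  constructor
  · rw [Matrix.transpose_mul, Matrix.transpose_mul, Matrix.transpose_transpose, h1]
    rw [Matrix.mul_assoc]
    simp [Matrix.neg_mul, Matrix.mul_neg, Matrix.mul_assoc]
  · intro i
    have := quad_zero_s7 h1 h2 (fun a => P a i)
    simp only [dotProduct, Matrix.mulVec, Finset.mul_sum] at this
    simp only [Matrix.mul_apply, Matrix.transpose_apply, Finset.sum_mul]
    rw [Finset.sum_comm]
    simpa [mul_assoc] using this

lemma fiber_card [Fintype k] {ι : Type*} [Fintype ι] [DecidableEq ι] (x0 x1 : ι) (h01 : x0 ≠ x1)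
    (v : ι → k) (hv0 : v x0 = 0) (hv : v ≠ 0) :
    Nat.card {A : Matrix ι ι k // ((Aᵀ = -A ∧ ∀ i, A i i = 0) ∧ A.det ≠ 0) ∧ (fun j => A x0 j) = v}
    = Nat.card {A : Matrix ι ι k // ((Aᵀ = -A ∧ ∀ i, A i i = 0) ∧ A.det ≠ 0) ∧
        (fun j => A x0 j) = (fun j => if j = x1 then (1:k) else 0)} := by
  obtain ⟨j₀, hj₀⟩ : ∃ j, v j ≠ 0 := by
    by_contra h
    push_neg at h
    exact hv (funext h)
  have hj0x0 : j₀ ≠ x0 := fun h => hj₀ (h ▸ hv0)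
  set τ : Equiv.Perm ι := Equiv.swap x1 j₀ with hτ
  set B : Matrix ι ι k :=
    1 + Matrix.replicateCol Unit (Pi.single j₀ (1:k)) * Matrix.replicateRow Unit (v - Pi.single j₀ 1) with hBdef
  set P : Matrix ι ι k := B.submatrix τ id with hPdef
  have hB : ∀ a j, B a j =
      (if a = j then (1:k) else 0) + (if a = j₀ then (1:k) else 0) * (v j - if j = j₀ then 1 else 0) := by
    intro a j
    simp [hBdef, Matrix.add_apply, Matrix.one_apply, Matrix.mul_apply, Matrix.replicateCol, Matrix.replicateRow,
      Pi.single_apply]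
  have hBdet : B.det = v j₀ := by
    rw [hBdef, Matrix.det_one_add_replicateCol_mul_replicateRow]
    simp [dotProduct, Pi.single_apply]
  have hPdet : IsUnit P.det := by
    rw [hPdef]
    have : (B.submatrix τ id).det = (τ.sign : k) * B.det := Matrix.det_permute τ B
    rw [this, hBdet]
    exact (IsUnit.mul (by rcases Int.units_eq_one_or τ.sign with h | h <;> simp [h])
      (isUnit_iff_ne_zero.mpr hj₀))
  have hτx0 : τ x0 = x0 := Equiv.swap_apply_of_ne_of_ne h01 (Ne.symm hj0x0)
  have hcol : ∀ i, P i x0 = if i = x0 then 1 else 0 := by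
    intro i
    have : P i x0 = if τ i = x0 then 1 else 0 := by
      rw [hPdef]
      simp only [Matrix.submatrix_apply, id]
      rw [hB]
      have hx0j0 : (x0 = j₀) = False := by simp [Ne.symm hj0x0]
      simp [hv0, Ne.symm hj0x0]
    rw [this]
    congr 1
    simp only [eq_iff_iff]
    constructor
    · intro h; exact τ.injective (h.trans hτx0.symm)
    · intro h; subst h; exact hτx0
  have hrow : ∀ j, P x1 j = v j := by
    intro j
    rw [hPdef]
    simp only [Matrix.submatrix_apply, id]
    rw [hτ]
    rw [Equiv.swap_apply_left, hB]
    by_cases h : j = j₀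
    · subst h
      simp only [eq_self_iff_true, if_true]; ring
    · rw [if_neg (fun hh => h hh.symm), if_pos rfl, if_neg h]; ring
  have hPP : P⁻¹ * P = 1 := Matrix.nonsing_inv_mul P hPdet
  have hPP' : P * P⁻¹ = 1 := Matrix.mul_nonsing_inv P hPdet
  have hdetP : P.det ≠ 0 := isUnit_iff_ne_zero.mp hPdet
  have hdetPinv : P⁻¹.det ≠ 0 := by
    have h : P⁻¹.det * P.det = 1 := by rw [← Matrix.det_mul, hPP, Matrix.det_one]
    intro h0; rw [h0, zero_mul] at h; exact zero_ne_one h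
  have hcolinv : ∀ i, P⁻¹ i x0 = if i = x0 then 1 else 0 := by
    intro i
    have h := congrFun (congrFun hPP i) x0
    rw [Matrix.mul_apply] at h
    have h2 : ∑ c, P⁻¹ i c * P c x0 = P⁻¹ i x0 := by
      rw [Finset.sum_congr rfl (fun c _ => by rw [hcol c])]
      simp
    rw [h2] at h
    rw [h, Matrix.one_apply]
  have hrowmap : ∀ (A : Matrix ι ι k), (∀ j, A x0 j = if j = x1 then 1 else 0) →
      ∀ j, (Pᵀ * A * P) x0 j = v j := by
    intro A hA j
    rw [Matrix.mul_apply]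
    have h1 : ∀ c, (Pᵀ * A) x0 c = A x0 c := by
      intro c
      rw [Matrix.mul_apply]
      rw [Finset.sum_congr rfl (fun a _ => by rw [Matrix.transpose_apply, hcol a])]
      simp
    calc ∑ c, (Pᵀ * A) x0 c * P c j
        = ∑ c, (if c = x1 then 1 else 0) * P c j :=
          Finset.sum_congr rfl (fun c _ => by rw [h1, hA])
      _ = P x1 j := by simp
      _ = v j := hrow j
  have hrowinv : ∀ (A : Matrix ι ι k), (∀ j, A x0 j = v j) →
      ∀ j, ((P⁻¹)ᵀ * A * P⁻¹) x0 j = if j = x1 then 1 else 0 := by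
    intro A hA j
    rw [Matrix.mul_apply]
    have h1 : ∀ c, ((P⁻¹)ᵀ * A) x0 c = A x0 c := by
      intro c
      rw [Matrix.mul_apply]
      rw [Finset.sum_congr rfl (fun a _ => by rw [Matrix.transpose_apply, hcolinv a])]
      simp
    have h2 : ∑ c, ((P⁻¹)ᵀ * A) x0 c * P⁻¹ c j = ∑ c, P x1 c * P⁻¹ c j :=
      Finset.sum_congr rfl (fun c _ => by rw [h1, hA, hrow])
    rw [h2, ← Matrix.mul_apply, hPP', Matrix.one_apply]
    by_cases h : x1 = j <;> simp [h, Ne.symm, eq_comm]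
  have htP : (P⁻¹)ᵀ * Pᵀ = 1 := by
    rw [← Matrix.transpose_mul, hPP', Matrix.transpose_one]
  have htP' : Pᵀ * (P⁻¹)ᵀ = 1 := by
    rw [← Matrix.transpose_mul, hPP, Matrix.transpose_one]
  refine Nat.card_congr (Equiv.symm ?_)
  refine {
    toFun := fun A => ⟨Pᵀ * A.1 * P, ⟨⟨(alt_conj A.2.1.1.1 A.2.1.1.2 P).1,
        (alt_conj A.2.1.1.1 A.2.1.1.2 P).2⟩, ?_⟩,
      funext (hrowmap A.1 (fun j => congrFun A.2.2 j))⟩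
    invFun := fun A => ⟨(P⁻¹)ᵀ * A.1 * P⁻¹, ⟨⟨(alt_conj A.2.1.1.1 A.2.1.1.2 P⁻¹).1,
        (alt_conj A.2.1.1.1 A.2.1.1.2 P⁻¹).2⟩, ?_⟩,
      funext (hrowinv A.1 (fun j => congrFun A.2.2 j))⟩
    left_inv := ?_
    right_inv := ?_ }
  · rw [Matrix.det_mul, Matrix.det_mul, Matrix.det_transpose]
    exact mul_ne_zero (mul_ne_zero hdetP A.2.1.2) hdetP
  · rw [Matrix.det_mul, Matrix.det_mul, Matrix.det_transpose]
    exact mul_ne_zero (mul_ne_zero hdetPinv A.2.1.2) hdetPinv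
  · intro A
    apply Subtype.ext
    show (P⁻¹)ᵀ * (Pᵀ * A.1 * P) * P⁻¹ = A.1
    simp only [← Matrix.mul_assoc]
    rw [htP, Matrix.one_mul, Matrix.mul_assoc, hPP', Matrix.mul_one]
  · intro A
    apply Subtype.ext
    show Pᵀ * ((P⁻¹)ᵀ * A.1 * P⁻¹) * P = A.1
    simp only [← Matrix.mul_assoc]
    rw [htP', Matrix.one_mul, Matrix.mul_assoc, hPP, Matrix.mul_one]

set_option linter.unusedSectionVars false

variable [Fintype k]

private noncomputable def Sm : Matrix (Fin 2) (Fin 2) k := !![0,1;-1,0]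
private noncomputable def Sm' : Matrix (Fin 2) (Fin 2) k := !![0,-1;1,0]
private noncomputable def Bm {m : ℕ} (b : Fin m → k) : Matrix (Fin 2) (Fin m) k :=
  Matrix.of fun i j => if i = 1 then b j else 0

private lemma SmInv1 : (Sm' : Matrix (Fin 2) (Fin 2) k) * Sm = 1 := by
  ext i j
  fin_cases i <;> fin_cases j <;>
    simp [Sm, Sm', Matrix.mul_apply, Fin.sum_univ_two, Matrix.one_apply]

private lemma SmInv2 : (Sm : Matrix (Fin 2) (Fin 2) k) * Sm' = 1 := by
  ext i j
  fin_cases i <;> fin_cases j <;>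
    simp [Sm, Sm', Matrix.mul_apply, Fin.sum_univ_two, Matrix.one_apply]

private noncomputable instance : Invertible (Sm : Matrix (Fin 2) (Fin 2) k) :=
  ⟨Sm', SmInv1, SmInv2⟩

private lemma hdetBlocks {m : ℕ} (b : Fin m → k) (D : Matrix (Fin m) (Fin m) k) :
    (Matrix.fromBlocks Sm (Bm b) (-(Bm b)ᵀ) D).det = D.det := by
  rw [Matrix.det_fromBlocks₁₁]
  have h1 : (Sm : Matrix (Fin 2) (Fin 2) k).det = 1 := by
    simp [Sm, Matrix.det_fin_two_of]
  have hS : (⅟(Sm : Matrix (Fin 2) (Fin 2) k)) = Sm' := rfl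
  have h2 : (-(Bm b)ᵀ) * ⅟(Sm : Matrix (Fin 2) (Fin 2) k) * (Bm b) = 0 := by
    rw [hS]
    ext i j
    simp [Bm, Sm', Matrix.mul_apply, Fin.sum_univ_two]
  rw [h1, h2, one_mul, sub_zero]

set_option maxHeartbeats 1000000 in
private lemma fiber_e1_card (m : ℕ) :
    Nat.card {A : Matrix (Fin 2 ⊕ Fin m) (Fin 2 ⊕ Fin m) k //
        ((Aᵀ = -A ∧ ∀ i, A i i = 0) ∧ A.det ≠ 0) ∧
        (fun j => A (Sum.inl 0) j) = (fun j => if j = Sum.inl 1 then (1:k) else 0)}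
    = Fintype.card k ^ m *
      Nat.card {D : Matrix (Fin m) (Fin m) k // (Dᵀ = -D ∧ ∀ i, D i i = 0) ∧ D.det ≠ 0} := by
  have hkey : ∀ A : Matrix (Fin 2 ⊕ Fin m) (Fin 2 ⊕ Fin m) k, Aᵀ = -A → (∀ i, A i i = 0) →
      ((fun j => A (Sum.inl 0) j) = (fun j => if j = Sum.inl 1 then (1:k) else 0)) →
      A = Matrix.fromBlocks Sm (Bm (fun j => A (Sum.inl 1) (Sum.inr j)))
        (-(Bm (fun j => A (Sum.inl 1) (Sum.inr j)))ᵀ)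
        (Matrix.of fun i j => A (Sum.inr i) (Sum.inr j)) := by
    intro A h1 h2 hrow
    have hA : ∀ a b, A b a = - A a b := fun a b => by
      have := congrFun (congrFun h1 a) b; simpa [Matrix.transpose_apply] using this
    have hr : ∀ j, A (Sum.inl 0) j = if j = Sum.inl 1 then (1:k) else 0 := fun j => congrFun hrow j
    ext i j
    rcases i with i | i <;> rcases j with j | j
    · fin_cases i <;> fin_cases j
      · simpa [Sm] using h2 (Sum.inl 0)
      · simpa [Sm] using hr (Sum.inl 1)
      · rw [hA]
        have := hr (Sum.inl 1)
        simp only [if_pos rfl] at this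
        simp [Sm, this]
      · simpa [Sm] using h2 (Sum.inl 1)
    · fin_cases i
      · simpa [Bm] using hr (Sum.inr j)
      · simp [Bm]
    · fin_cases j
      · rw [hA]
        have := hr (Sum.inr i)
        simp only [reduceCtorEq, reduceIte] at this
        simp [Bm, this]
      · rw [hA]; simp [Bm]
    · simp
  have e : {A : Matrix (Fin 2 ⊕ Fin m) (Fin 2 ⊕ Fin m) k //
        ((Aᵀ = -A ∧ ∀ i, A i i = 0) ∧ A.det ≠ 0) ∧
        (fun j => A (Sum.inl 0) j) = (fun j => if j = Sum.inl 1 then (1:k) else 0)} ≃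
      (Fin m → k) × {D : Matrix (Fin m) (Fin m) k // (Dᵀ = -D ∧ ∀ i, D i i = 0) ∧ D.det ≠ 0} := by
    refine {
      toFun := fun A => ⟨fun j => A.1 (Sum.inl 1) (Sum.inr j),
        ⟨Matrix.of fun i j => A.1 (Sum.inr i) (Sum.inr j), ⟨⟨?_, ?_⟩, ?_⟩⟩⟩
      invFun := fun p => ⟨Matrix.fromBlocks Sm (Bm p.1) (-(Bm p.1)ᵀ) p.2.1, ⟨⟨?_, ?_⟩, ?_⟩, ?_⟩
      left_inv := ?_
      right_inv := ?_ }
    · -- D transpose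
      ext i j
      have := congrFun (congrFun A.2.1.1.1 (Sum.inr i)) (Sum.inr j)
      simpa [Matrix.transpose_apply] using this
    · intro i; exact A.2.1.1.2 (Sum.inr i)
    · -- D det ≠ 0
      have h := A.2.1.2
      rw [hkey A.1 A.2.1.1.1 A.2.1.1.2 A.2.2, hdetBlocks] at h
      exact h
    · -- fromBlocks transpose
      ext i j
      rcases i with i | i <;> rcases j with j | j
      · fin_cases i <;> fin_cases j <;> simp [Sm]
      · simp [Matrix.transpose_apply]
      · simp [Matrix.transpose_apply]
      · simp [Matrix.transpose_apply, Bm]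
        exact (congrFun (congrFun p.2.2.1.1 i) j : _)
    · -- fromBlocks diag
      intro i
      rcases i with i | i
      · fin_cases i <;> simp [Sm]
      · exact p.2.2.1.2 i
    · rw [hdetBlocks]; exact p.2.2.2
    · -- fromBlocks row
      funext j
      rcases j with j | j
      · fin_cases j <;> simp [Sm]
      · simp [Bm]
    · intro A
      apply Subtype.ext
      exact (hkey A.1 A.2.1.1.1 A.2.1.1.2 A.2.2).symm
    · rintro ⟨b, D, hD⟩
      refine Prod.ext ?_ ?_
      · funext j; simp [Bm]
      · apply Subtype.ext
        ext i j
        simp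
  rw [Nat.card_congr e, Nat.card_prod, Nat.card_fun, Nat.card_eq_fintype_card (α := k),
      Nat.card_eq_fintype_card (α := Fin m), Fintype.card_fin]

private lemma cardT (m : ℕ) :
    Nat.card {v : (Fin 2 ⊕ Fin m) → k // v ≠ 0 ∧ v (Sum.inl 0) = 0}
      = Fintype.card k ^ (m + 1) - 1 := by
  have e : {v : (Fin 2 ⊕ Fin m) → k // v ≠ 0 ∧ v (Sum.inl 0) = 0} ≃
      {w : {j : Fin 2 ⊕ Fin m // j ≠ Sum.inl 0} → k // w ≠ 0} := by
    refine {
      toFun := fun v => ⟨fun j => v.1 j.1, fun h => v.2.1 (funext fun j => ?_)⟩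
      invFun := fun w => ⟨fun j => if h : j = Sum.inl 0 then 0 else w.1 ⟨j, h⟩, ?_, by simp⟩
      left_inv := ?_
      right_inv := ?_ }
    · by_cases hj : j = Sum.inl 0
      · rw [hj]; exact v.2.2
      · exact congrFun h ⟨j, hj⟩
    · intro h
      apply w.2
      funext j
      have := congrFun h j.1
      simpa [dif_neg j.2] using this
    · intro v
      apply Subtype.ext
      funext j
      by_cases hj : j = Sum.inl 0
      · simp only [dif_pos hj]; rw [hj]; exact v.2.2.symm
      · simp only [dif_neg hj]
    · intro w
      apply Subtype.ext
      funext j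
      simp [dif_neg j.2]
  rw [Nat.card_congr e]
  have h1 : Nat.card {w : {j : Fin 2 ⊕ Fin m // j ≠ Sum.inl 0} → k // w ≠ 0}
      = Nat.card ({j : Fin 2 ⊕ Fin m // j ≠ Sum.inl 0} → k) - 1 := by
    rw [Nat.card_eq_fintype_card, Nat.card_eq_fintype_card]
    have := Fintype.card_subtype_compl (fun w : {j : Fin 2 ⊕ Fin m // j ≠ Sum.inl 0} → k => w = 0)
    rw [Fintype.card_subtype_eq (0 : {j : Fin 2 ⊕ Fin m // j ≠ Sum.inl 0} → k)] at this
    convert this using 2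
  rw [h1, Nat.card_fun, Nat.card_eq_fintype_card (α := k)]
  congr 2
  rw [Nat.card_eq_fintype_card]
  have := Fintype.card_subtype_compl (fun j : Fin 2 ⊕ Fin m => j = Sum.inl 0)
  rw [Fintype.card_subtype_eq (Sum.inl 0 : Fin 2 ⊕ Fin m)] at this
  have hcard : Fintype.card (Fin 2 ⊕ Fin m) = m + 2 := by
    simp [Fintype.card_sum]; omega
  rw [hcard] at this
  have h2 : Fintype.card {j : Fin 2 ⊕ Fin m // ¬ j = Sum.inl 0} = m + 1 := by
    rw [this]; omega
  rw [← h2]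

private lemma step (m : ℕ) :
    Nat.card {A : Matrix (Fin 2 ⊕ Fin m) (Fin 2 ⊕ Fin m) k //
        (Aᵀ = -A ∧ ∀ i, A i i = 0) ∧ A.det ≠ 0}
    = (Fintype.card k ^ (m + 1) - 1) * (Fintype.card k ^ m *
        Nat.card {D : Matrix (Fin m) (Fin m) k // (Dᵀ = -D ∧ ∀ i, D i i = 0) ∧ D.det ≠ 0}) := by
  set T := {v : (Fin 2 ⊕ Fin m) → k // v ≠ 0 ∧ v (Sum.inl 0) = 0} with hT
  set S := {A : Matrix (Fin 2 ⊕ Fin m) (Fin 2 ⊕ Fin m) k //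
      (Aᵀ = -A ∧ ∀ i, A i i = 0) ∧ A.det ≠ 0} with hS
  let f : S → T := fun A => ⟨fun j => A.1 (Sum.inl 0) j, by
    constructor
    · intro h
      exact A.2.2 (Matrix.det_eq_zero_of_row_eq_zero (Sum.inl 0) (fun j => congrFun h j))
    · exact A.2.1.2 (Sum.inl 0)⟩
  have hsig : Nat.card S = ∑ t : T, Nat.card {A : S // f A = t} := by
    rw [Nat.card_congr (Equiv.sigmaFiberEquiv f).symm, Nat.card_eq_fintype_card,
      Fintype.card_sigma]
    exact Finset.sum_congr rfl (fun t _ => (Nat.card_eq_fintype_card).symm)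
  have hfib : ∀ t : T, Nat.card {A : S // f A = t}
      = Fintype.card k ^ m *
        Nat.card {D : Matrix (Fin m) (Fin m) k // (Dᵀ = -D ∧ ∀ i, D i i = 0) ∧ D.det ≠ 0} := by
    intro t
    have e2 : {A : S // f A = t} ≃ {A : Matrix (Fin 2 ⊕ Fin m) (Fin 2 ⊕ Fin m) k //
        ((Aᵀ = -A ∧ ∀ i, A i i = 0) ∧ A.det ≠ 0) ∧ (fun j => A (Sum.inl 0) j) = t.1} := {
      toFun := fun X => ⟨X.1.1, X.1.2, congrArg Subtype.val X.2⟩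
      invFun := fun Y => ⟨⟨Y.1, Y.2.1⟩, Subtype.ext Y.2.2⟩
      left_inv := fun X => Subtype.ext rfl
      right_inv := fun Y => Subtype.ext rfl }
    rw [Nat.card_congr e2]
    have h01 : (Sum.inl 0 : Fin 2 ⊕ Fin m) ≠ Sum.inl 1 := by simp [Fin.ext_iff]
    rw [fiber_card (Sum.inl 0) (Sum.inl 1) h01 t.1 t.2.2 t.2.1]
    exact fiber_e1_card m
  rw [hsig, Finset.sum_congr rfl (fun t _ => hfib t), Finset.sum_const, Finset.card_univ,
    smul_eq_mul, ← Nat.card_eq_fintype_card, cardT m]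


private lemma pairs_card (M : ℕ) :
    Nat.card {p : Fin M × Fin M // p.1 < p.2} = M * (M - 1) / 2 := by
  have e : {p : Fin M × Fin M // p.1 < p.2} ≃ Σ j : Fin M, Fin j.1 := {
    toFun := fun p => ⟨p.1.2, ⟨p.1.1.1, p.2⟩⟩
    invFun := fun x => ⟨(⟨x.2.1, lt_trans x.2.2 x.1.2⟩, x.1), x.2.2⟩
    left_inv := fun p => by
      apply Subtype.ext
      apply Prod.ext <;> simp
    right_inv := fun x => by
      rcases x with ⟨j, i⟩
      simp }
  rw [Nat.card_congr e, Nat.card_eq_fintype_card, Fintype.card_sigma]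
  simp only [Fintype.card_fin]
  rw [Fin.sum_univ_eq_sum_range (fun i => i) M]
  have h2 : (∑ i ∈ Finset.range M, i) * 2 = M * (M - 1) := Finset.sum_range_id_mul_two M
  omega

private lemma alt_card (M : ℕ) :
    Nat.card {A : Matrix (Fin M) (Fin M) k // Aᵀ = -A ∧ ∀ i, A i i = 0}
      = Fintype.card k ^ (M * (M - 1) / 2) := by
  have e : {A : Matrix (Fin M) (Fin M) k // Aᵀ = -A ∧ ∀ i, A i i = 0} ≃
      ({p : Fin M × Fin M // p.1 < p.2} → k) := by
    refine {
      toFun := fun A => fun p => A.1 p.1.1 p.1.2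
      invFun := fun f => ⟨Matrix.of fun i j =>
        if h : i < j then f ⟨(i, j), h⟩ else if h' : j < i then -f ⟨(j, i), h'⟩ else 0, ?_, ?_⟩
      left_inv := ?_
      right_inv := ?_ }
    · ext i j
      rcases lt_trichotomy i j with h | h | h
      · simp [Matrix.transpose_apply, h, not_lt.mpr h.le, h.ne']
      · subst h; simp [Matrix.transpose_apply, lt_irrefl]
      · simp [Matrix.transpose_apply, h, not_lt.mpr h.le, h.ne']
    · intro i; simp [lt_irrefl]
    · intro A
      apply Subtype.ext
      ext i j
      have hA : ∀ a b, A.1 b a = - A.1 a b := fun a b => by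
        have := congrFun (congrFun A.2.1 a) b; simpa [Matrix.transpose_apply] using this
      rcases lt_trichotomy i j with h | h | h
      · simp [h]
      · subst h; simp [lt_irrefl, (A.2.2 i).symm]
      · simp [h, not_lt.mpr h.le, h.ne', (hA j i).symm]
    · intro f
      funext p
      simp [p.2]
  rw [Nat.card_congr e, Nat.card_fun, Nat.card_eq_fintype_card (α := k), pairs_card]

private lemma reindexN {ι ι' : Type} [Fintype ι] [DecidableEq ι] [Fintype ι'] [DecidableEq ι']
    (e : ι ≃ ι') :
    Nat.card {A : Matrix ι ι k // (Aᵀ = -A ∧ ∀ i, A i i = 0) ∧ A.det ≠ 0}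
      = Nat.card {A : Matrix ι' ι' k // (Aᵀ = -A ∧ ∀ i, A i i = 0) ∧ A.det ≠ 0} := by
  have mem : ∀ {γ δ : Type} [Fintype γ] [DecidableEq γ] [Fintype δ] [DecidableEq δ]
      (g : γ ≃ δ) (A : Matrix γ γ k), ((Aᵀ = -A ∧ ∀ i, A i i = 0) ∧ A.det ≠ 0) →
      (((A.submatrix g.symm g.symm)ᵀ = -(A.submatrix g.symm g.symm) ∧
        ∀ i, (A.submatrix g.symm g.symm) i i = 0) ∧ (A.submatrix g.symm g.symm).det ≠ 0) := by
    intro γ δ _ _ _ _ g A hA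
    have hAp : ∀ a b, A b a = - A a b := fun a b => by
      have := congrFun (congrFun hA.1.1 a) b; simpa [Matrix.transpose_apply] using this
    refine ⟨⟨?_, ?_⟩, ?_⟩
    · ext i j; simp [Matrix.transpose_apply, hAp (g.symm i) (g.symm j)]
    · intro i; simp [hA.1.2]
    · rw [Matrix.det_submatrix_equiv_self]; exact hA.2
  refine Nat.card_congr {
    toFun := fun A => ⟨A.1.submatrix e.symm e.symm, mem e A.1 A.2⟩
    invFun := fun A => ⟨A.1.submatrix e e, by
      have := mem e.symm A.1 A.2; simpa using this⟩
    left_inv := fun A => by apply Subtype.ext; ext i j; simp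
    right_inv := fun A => by apply Subtype.ext; ext i j; simp }

private lemma baseN :
    Nat.card {A : Matrix (Fin 0) (Fin 0) k // (Aᵀ = -A ∧ ∀ i, A i i = 0) ∧ A.det ≠ 0} = 1 := by
  haveI : Unique {A : Matrix (Fin 0) (Fin 0) k // (Aᵀ = -A ∧ ∀ i, A i i = 0) ∧ A.det ≠ 0} := {
    default := ⟨0, ⟨by ext i j; exact i.elim0, fun i => i.elim0⟩, by
      rw [Matrix.det_fin_zero]; exact one_ne_zero⟩
    uniq := fun A => by
      apply Subtype.ext
      ext i j
      exact i.elim0 }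
  rw [Nat.card_eq_fintype_card, Fintype.card_unique]

private lemma Nval (n : ℕ) :
    Nat.card {A : Matrix (Fin (2*n)) (Fin (2*n)) k // (Aᵀ = -A ∧ ∀ i, A i i = 0) ∧ A.det ≠ 0}
      = ∏ i ∈ Finset.range n, ((Fintype.card k ^ (2*i+1) - 1) * Fintype.card k ^ (2*i)) := by
  induction n with
  | zero => simpa using (baseN (k := k))
  | succ n ih =>
    have h22 : 2*(n+1) = 2 + 2*n := by ring
    have e1 : Fin (2*(n+1)) ≃ Fin (2+2*n) := finCongr h22
    rw [reindexN e1]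
    rw [← reindexN (finSumFinEquiv : Fin 2 ⊕ Fin (2*n) ≃ Fin (2+2*n))]
    rw [step (2*n), ih, Finset.prod_range_succ, ← mul_assoc, mul_comm]

private lemma sum4 (n : ℕ) : ∑ i ∈ Finset.range n, (4*i+1) = n*(2*n-1) := by
  induction n with
  | zero => rfl
  | succ n ih =>
    rw [Finset.sum_range_succ, ih]
    cases n with
    | zero => norm_num
    | succ m =>
      rw [show 2*(m+1)-1 = 2*m+1 by omega, show 2*(m+1+1)-1 = 2*m+3 by omega]
      ring

/-- over a finite field `k` with `q` elements, the number of alternating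
`2n × 2n` matrices is `q^{n(2n−1)}`, and the number of invertible ones is
`q^{n(2n−1)} · ∏_{i=1}^{n} (1 − q^{1−2i})` (equivalently, that product is the proportion of
alternating matrices that are invertible). -/
theorem stmt7 {k : Type} [Field k] [Fintype k] (n : ℕ) (hn : 1 ≤ n) :
    Nat.card {A : Matrix (Fin (2 * n)) (Fin (2 * n)) k //
        A.transpose = -A ∧ ∀ i, A i i = 0}
      = Fintype.card k ^ (n * (2 * n - 1)) ∧
    (Nat.card {A : Matrix (Fin (2 * n)) (Fin (2 * n)) k //
        (A.transpose = -A ∧ ∀ i, A i i = 0) ∧ A.det ≠ 0} : ℚ)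
      = (Fintype.card k : ℚ) ^ (n * (2 * n - 1)) *
        ∏ i ∈ Finset.range n, (1 - (Fintype.card k : ℚ) ^ (1 - 2 * ((i : ℤ) + 1))) := by
  set q := Fintype.card k with hqdef
  have hq1 : 1 ≤ q := Fintype.card_pos
  have hq0 : (q : ℚ) ≠ 0 := by
    simp only [ne_eq, Nat.cast_eq_zero]
    omega
  have hexp : (2*n) * (2*n - 1) / 2 = n * (2*n - 1) := by
    have h : (2*n) * (2*n-1) = 2 * (n * (2*n-1)) := by ring
    rw [h]
    exact Nat.mul_div_cancel_left _ (by norm_num)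
  constructor
  · rw [alt_card (2*n), hexp]
  · rw [Nval n]
    have hterm : ∀ i : ℕ, ((q:ℚ))^(4*i+1) * (1 - (q:ℚ) ^ (1 - 2 * ((i : ℤ) + 1)))
        = ((q:ℚ)^(2*i+1) - 1) * (q:ℚ)^(2*i) := by
      intro i
      have h1 : (1 - 2 * ((i : ℤ) + 1)) = -(2*(i:ℤ)+1) := by ring
      have h2 : (q:ℚ)^(4*i+1) * (q:ℚ) ^ (-(2*(i:ℤ)+1)) = (q:ℚ)^(2*i) := by
        rw [← zpow_natCast (q:ℚ) (4*i+1), ← zpow_add₀ hq0,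
          show ((4*i+1:ℕ):ℤ) + (-(2*(i:ℤ)+1)) = ((2*i:ℕ):ℤ) by push_cast; ring,
          zpow_natCast]
      rw [h1, mul_sub, mul_one, h2]
      ring
    have hrhs : (q : ℚ) ^ (n * (2 * n - 1)) *
        ∏ i ∈ Finset.range n, (1 - (q : ℚ) ^ (1 - 2 * ((i : ℤ) + 1)))
        = ∏ i ∈ Finset.range n, (((q:ℚ)^(2*i+1) - 1) * (q:ℚ)^(2*i)) := by
      rw [← sum4 n, ← Finset.prod_pow_eq_pow_sum, ← Finset.prod_mul_distrib]
      exact Finset.prod_congr rfl (fun i _ => hterm i)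
    rw [hrhs, Nat.cast_prod]
    refine Finset.prod_congr rfl (fun i _ => ?_)
    have hle : 1 ≤ q^(2*i+1) := Nat.one_le_pow _ _ hq1
    rw [← hqdef, Nat.cast_mul, Nat.cast_sub hle]
    push_cast
    ring
end
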